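/- arXiv:1603.04005 — 7 statements merged into one kernel-verified Lean document; each statement's English description precedes it below -/
import Mathlib

section
/- For any two connected graphs G₁ and G₂, the distinguishing number of their join satisfies max{D(G₁), D(G₂)} ≤ D(G₁ + G₂) ≤ D(G₁) + D(G₂). -/
open SimpleGraph

/-- The join of two graphs: disjoint union plus all edges between the parts. -/
def joinGraph {V W : Type*} (G : SimpleGraph V) (H : SimpleGraph W) : SimpleGraph (V ⊕ W) where
  Adj x y :=
    match x, y with
    | Sum.inl a, Sum.inl b => G.Adj a b
    | Sum.inr a, Sum.inr b => H.Adj a b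
    | Sum.inl _, Sum.inr _ => True
    | Sum.inr _, Sum.inl _ => True
  symm := by constructor; rintro (a|a) (b|b) h <;> first | exact h.symm | trivial
  loopless := by constructor; rintro (a|a) h <;> exact (SimpleGraph.irrefl _) h

instance joinGraphDecidableAdj {V W : Type*} {G : SimpleGraph V} {H : SimpleGraph W}
    [DecidableRel G.Adj] [DecidableRel H.Adj] : DecidableRel (joinGraph G H).Adj
  | Sum.inl a, Sum.inl b => inferInstanceAs (Decidable (G.Adj a b))
  | Sum.inr a, Sum.inr b => inferInstanceAs (Decidable (H.Adj a b))
  | Sum.inl _, Sum.inr _ => Decidable.isTrue trivial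
  | Sum.inr _, Sum.inl _ => Decidable.isTrue trivial

/-- The distinguishing number: least `d` admitting a vertex `d`-labeling preserved only by
the identity automorphism. -/
noncomputable def distinguishingNumber {V : Type*} (G : SimpleGraph V) : ℕ :=
  sInf {d : ℕ | ∃ c : V → Fin d, ∀ f : G ≃g G, (∀ v, c (f v) = c v) → ∀ v, f v = v}

/-- The distinguishing index: least `d` admitting an edge `d`-labeling preserved only by
the identity automorphism. -/
noncomputable def distinguishingIndex {V : Type*} (G : SimpleGraph V) : ℕ :=
  sInf {d : ℕ | ∃ c : Sym2 V → Fin d, ∀ f : G ≃g G,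
    (∀ e ∈ G.edgeSet, c (Sym2.map (⇑f) e) = c e) → ∀ v, f v = v}

/-- The non-neighborhood of a vertex. -/
def nonNbhd {V : Type*} (G : SimpleGraph V) (v : V) : Set V := {u | ¬ G.Adj v u}

/-- The k-fold join of a graph with itself. -/
def kJoin {V : Type*} (G : SimpleGraph V) (k : ℕ) : SimpleGraph (Fin k × V) where
  Adj x y := x.1 ≠ y.1 ∨ (x.1 = y.1 ∧ G.Adj x.2 y.2)
  symm := by
    constructor
    rintro x y (h | ⟨h1, h2⟩)
    · exact Or.inl h.symm
    · exact Or.inr ⟨h1.symm, h2.symm⟩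
  loopless := by
    constructor
    rintro x (h | ⟨h1, h2⟩)
    · exact h rfl
    · exact (SimpleGraph.irrefl _) h2

/-- `n` disjoint copies of `K₂`. -/
def nK2 (n : ℕ) : SimpleGraph (Fin n × Fin 2) where
  Adj x y := x.1 = y.1 ∧ x.2 ≠ y.2
  symm := by constructor; rintro x y ⟨h1, h2⟩; exact ⟨h1.symm, h2.symm⟩
  loopless := by constructor; rintro x ⟨h1, h2⟩; exact h2 rfl

/-- The friendship graph `Fₙ`: the join of `K₁` with `n` copies of `K₂`. -/
def friendshipGraph (n : ℕ) : SimpleGraph (Fin 1 ⊕ (Fin n × Fin 2)) :=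
  joinGraph (⊤ : SimpleGraph (Fin 1)) (nK2 n)

/-- A graph has a Hamiltonian path. -/
def HasHamiltonianPath {V : Type*} [DecidableEq V] (G : SimpleGraph V) : Prop :=
  ∃ (u v : V) (p : G.Walk u v), p.IsHamiltonian

/-- The set of numbers of colors admitting a distinguishing coloring. -/
def distSet {V : Type*} (G : SimpleGraph V) : Set ℕ :=
  {d : ℕ | ∃ c : V → Fin d, ∀ f : G ≃g G, (∀ v, c (f v) = c v) → ∀ v, f v = v}

lemma distSet_nonempty {V : Type*} [Fintype V] (G : SimpleGraph V) : (distSet G).Nonempty :=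
  ⟨Fintype.card V, ⇑(Fintype.equivFin V), fun _ hf v => (Fintype.equivFin V).injective (hf v)⟩

lemma distinguishingNumber_eq {V : Type*} (G : SimpleGraph V) :
    distinguishingNumber G = sInf (distSet G) := rfl

/-- Extend an automorphism of `G₁` by the identity on `G₂` to an automorphism of the join. -/
def extAutoL {V W : Type*} (G₁ : SimpleGraph V) (G₂ : SimpleGraph W) (g : G₁ ≃g G₁) :
    joinGraph G₁ G₂ ≃g joinGraph G₁ G₂ where
  toEquiv := Equiv.sumCongr g.toEquiv (Equiv.refl W)
  map_rel_iff' := by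
    rintro (a|a) (b|b)
    · exact g.map_rel_iff
    · exact Iff.rfl
    · exact Iff.rfl
    · exact Iff.rfl

/-- Extend an automorphism of `G₂` by the identity on `G₁` to an automorphism of the join. -/
def extAutoR {V W : Type*} (G₁ : SimpleGraph V) (G₂ : SimpleGraph W) (g : G₂ ≃g G₂) :
    joinGraph G₁ G₂ ≃g joinGraph G₁ G₂ where
  toEquiv := Equiv.sumCongr (Equiv.refl V) g.toEquiv
  map_rel_iff' := by
    rintro (a|a) (b|b)
    · exact Iff.rfl
    · exact Iff.rfl
    · exact Iff.rfl
    · exact g.map_rel_iff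

theorem join_distinguishingNumber_bounds {V W : Type*} [Fintype V] [Fintype W]
    (G₁ : SimpleGraph V) (G₂ : SimpleGraph W)
    (h₁ : G₁.Connected) (h₂ : G₂.Connected) :
    max (distinguishingNumber G₁) (distinguishingNumber G₂)
        ≤ distinguishingNumber (joinGraph G₁ G₂) ∧
    distinguishingNumber (joinGraph G₁ G₂)
        ≤ distinguishingNumber G₁ + distinguishingNumber G₂ := by
  classical
  constructor
  · -- lower bound
    have hmem : distinguishingNumber (joinGraph G₁ G₂) ∈ distSet (joinGraph G₁ G₂) :=
      Nat.sInf_mem (distSet_nonempty _)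
    obtain ⟨c, hc⟩ := hmem
    refine max_le ?_ ?_
    · rw [distinguishingNumber_eq]
      apply Nat.sInf_le
      refine ⟨fun v => c (Sum.inl v), fun g hg v => ?_⟩
      have key : ∀ x, extAutoL G₁ G₂ g x = x := by
        apply hc
        rintro (v | w)
        · exact hg v
        · rfl
      have := key (Sum.inl v)
      simpa [extAutoL] using this
    · rw [distinguishingNumber_eq]
      apply Nat.sInf_le
      refine ⟨fun w => c (Sum.inr w), fun g hg w => ?_⟩
      have key : ∀ x, extAutoR G₁ G₂ g x = x := by
        apply hc
        rintro (v | w)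
        · rfl
        · exact hg w
      have := key (Sum.inr w)
      simpa [extAutoR] using this
  · -- upper bound
    have hm1 : distinguishingNumber G₁ ∈ distSet G₁ := Nat.sInf_mem (distSet_nonempty _)
    have hm2 : distinguishingNumber G₂ ∈ distSet G₂ := Nat.sInf_mem (distSet_nonempty _)
    obtain ⟨c₁, hc₁⟩ := hm1
    obtain ⟨c₂, hc₂⟩ := hm2
    rw [distinguishingNumber_eq]
    apply Nat.sInf_le
    refine ⟨Sum.elim (fun v => Fin.castAdd (distinguishingNumber G₂) (c₁ v)) (fun w => Fin.natAdd (distinguishingNumber G₁) (c₂ w)),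
      fun f hf => ?_⟩
    -- f maps the left part into the left part
    have hL : ∀ v : V, ∃ v', f (Sum.inl v) = Sum.inl v' := by
      intro v
      cases hfv : f (Sum.inl v) with
      | inl v' => exact ⟨v', rfl⟩
      | inr w' =>
        exfalso
        have h := hf (Sum.inl v)
        rw [hfv] at h
        have h' := congrArg Fin.val h
        simp only [Sum.elim_inl, Sum.elim_inr, Fin.coe_natAdd, Fin.coe_castAdd] at h'
        have := (c₁ v).isLt
        omega
    have hR : ∀ w : W, ∃ w', f (Sum.inr w) = Sum.inr w' := by
      intro w
      cases hfw : f (Sum.inr w) with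
      | inr w' => exact ⟨w', rfl⟩
      | inl v' =>
        exfalso
        have h := hf (Sum.inr w)
        rw [hfw] at h
        have h' := congrArg Fin.val h
        simp only [Sum.elim_inl, Sum.elim_inr, Fin.coe_natAdd, Fin.coe_castAdd] at h'
        have := (c₁ v').isLt
        omega
    choose g hg using hL
    choose h hh using hR
    -- f.symm maps the left part into the left part
    have hL' : ∀ v : V, ∃ v', f.symm (Sum.inl v) = Sum.inl v' := by
      intro v
      cases hfv : f.symm (Sum.inl v) with
      | inl v' => exact ⟨v', rfl⟩
      | inr w' =>
        exfalso
        have : f (Sum.inr w') = Sum.inl v := by rw [← hfv]; exact f.apply_symm_apply _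
        rw [hh w'] at this
        cases this
    have hR' : ∀ w : W, ∃ w', f.symm (Sum.inr w) = Sum.inr w' := by
      intro w
      cases hfw : f.symm (Sum.inr w) with
      | inr w' => exact ⟨w', rfl⟩
      | inl v' =>
        exfalso
        have : f (Sum.inl v') = Sum.inr w := by rw [← hfw]; exact f.apply_symm_apply _
        rw [hg v'] at this
        cases this
    choose g' hg' using hL'
    choose h' hh' using hR'
    have hgg' : ∀ v, g' (g v) = v := by
      intro v
      have : f.symm (Sum.inl (g v)) = Sum.inl v := by
        rw [← hg v]; exact f.symm_apply_apply _
      rw [hg' (g v)] at this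
      exact Sum.inl.inj this
    have hg'g : ∀ v, g (g' v) = v := by
      intro v
      have : f (Sum.inl (g' v)) = Sum.inl v := by
        rw [← hg' v]; exact f.apply_symm_apply _
      rw [hg (g' v)] at this
      exact Sum.inl.inj this
    have hhh' : ∀ w, h' (h w) = w := by
      intro w
      have : f.symm (Sum.inr (h w)) = Sum.inr w := by
        rw [← hh w]; exact f.symm_apply_apply _
      rw [hh' (h w)] at this
      exact Sum.inr.inj this
    have hh'h : ∀ w, h (h' w) = w := by
      intro w
      have : f (Sum.inr (h' w)) = Sum.inr w := by
        rw [← hh' w]; exact f.apply_symm_apply _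
      rw [hh (h' w)] at this
      exact Sum.inr.inj this
    -- build the restricted automorphisms
    let e₁ : G₁ ≃g G₁ :=
      ⟨⟨g, g', hgg', hg'g⟩, by
        intro a b
        have := f.map_rel_iff (a := Sum.inl a) (b := Sum.inl b)
        rw [hg a, hg b] at this
        exact this⟩
    let e₂ : G₂ ≃g G₂ :=
      ⟨⟨h, h', hhh', hh'h⟩, by
        intro a b
        have := f.map_rel_iff (a := Sum.inr a) (b := Sum.inr b)
        rw [hh a, hh b] at this
        exact this⟩
    have he₁ : ∀ v, e₁ v = v := by
      apply hc₁
      intro v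
      have hcol := hf (Sum.inl v)
      rw [hg v] at hcol
      simp only [Sum.elim_inl] at hcol
      have h' := congrArg Fin.val hcol
      simp only [Fin.coe_castAdd] at h'
      exact Fin.val_injective h'
    have he₂ : ∀ w, e₂ w = w := by
      apply hc₂
      intro w
      have hcol := hf (Sum.inr w)
      rw [hh w] at hcol
      simp only [Sum.elim_inr] at hcol
      have h'' := congrArg Fin.val hcol
      simp only [Fin.coe_natAdd] at h''
      have : (c₂ (h w)).val = (c₂ w).val := by omega
      exact Fin.val_injective this
    rintro (v | w)
    · rw [hg v]
      exact congrArg Sum.inl (he₁ v)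
    · rw [hh w]
      exact congrArg Sum.inr (he₂ w)
end

section
/- Let n > m, n > m', and m ≠ m'. Then the distinguishing number of the join K_{n,m} + K_{n,m'} of the complete bipartite graphs K_{n,m} and K_{n,m'} equals n + 1. -/
open SimpleGraph

abbrev BV (n m m' : ℕ) := (Fin n ⊕ Fin m) ⊕ (Fin n ⊕ Fin m')
abbrev JG (n m m' : ℕ) : SimpleGraph (BV n m m') :=
  joinGraph (completeBipartiteGraph (Fin n) (Fin m)) (completeBipartiteGraph (Fin n) (Fin m'))

def cls {n m m' : ℕ} : BV n m m' → Fin 4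
| .inl (.inl _) => 0
| .inl (.inr _) => 1
| .inr (.inl _) => 2
| .inr (.inr _) => 3

lemma adj_iff {n m m' : ℕ} (v u : BV n m m') : (JG n m m').Adj v u ↔ cls v ≠ cls u := by
  rcases v with (a|b)|(a|b) <;> rcases u with (a'|b')|(a'|b') <;>
    simp [joinGraph, completeBipartiteGraph, cls]

def isoOfCls {n m m' : ℕ} (e : BV n m m' ≃ BV n m m')
    (h : ∀ v u, cls (e v) = cls (e u) ↔ cls v = cls u) : JG n m m' ≃g JG n m m' where
  toEquiv := e
  map_rel_iff' := by
    intro v u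
    rw [adj_iff, adj_iff]
    exact not_congr (h v u)

lemma cls_eq_of_iso {n m m' : ℕ} (f : JG n m m' ≃g JG n m m') {v u : BV n m m'}
    (h : cls v = cls u) : cls (f v) = cls (f u) := by
  have h1 : ¬ (JG n m m').Adj v u := by rw [adj_iff]; simpa using h
  have h2 : ¬ (JG n m m').Adj (f v) (f u) := fun hh => h1 (f.map_adj_iff.mp hh)
  rw [adj_iff] at h2
  simpa using h2

def col (n m m' : ℕ) (h1 : m < n) (h2 : m' < n) : BV n m m' → Fin (n+1)
| .inl (.inl a) => a.castSucc
| .inl (.inr b) => ⟨b.1, by have := b.isLt; omega⟩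
| .inr (.inl a) => a.succ
| .inr (.inr b) => ⟨b.1, by have := b.isLt; omega⟩

lemma mem_upper {n m m' : ℕ} (h1 : m < n) (h2 : m' < n) (h3 : m ≠ m') :
    ∀ f : JG n m m' ≃g JG n m m',
      (∀ v, col n m m' h1 h2 (f v) = col n m m' h1 h2 v) → ∀ v, f v = v := by
  have hn1 : 0 < n := by omega
  intro f hc
  -- the unique vertex of color n is fixed
  have hz : f (.inr (.inl ⟨n-1, by omega⟩)) = .inr (.inl ⟨n-1, by omega⟩) := by
    have h := hc (.inr (.inl ⟨n-1, by omega⟩))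
    rcases hw : f (.inr (.inl ⟨n-1, by omega⟩)) with (x|x)|(x|x) <;> rw [hw] at h <;>
      have hv := congrArg Fin.val h <;> simp [col] at hv
    · exfalso; have := x.isLt; omega
    · exfalso; have := x.isLt; omega
    · have : x = (⟨n-1, by omega⟩ : Fin n) := Fin.ext (by simpa using hv)
      rw [this]
    · exfalso; have := x.isLt; omega
  -- A' is fixed pointwise
  have hA' : ∀ a : Fin n, f (.inr (.inl a)) = .inr (.inl a) := by
    intro a
    have hcl : cls (f (.inr (.inl a))) = cls (f (.inr (.inl ⟨n-1, by omega⟩))) :=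
      cls_eq_of_iso f rfl
    rw [hz] at hcl
    rcases hw : f (.inr (.inl a)) with (x|x)|(x|x) <;> rw [hw] at hcl <;> simp [cls] at hcl
    have h := hc (.inr (.inl a)); rw [hw] at h
    have hv := congrArg Fin.val h; simp [col] at hv
    rw [show x = a from Fin.ext hv]
  -- A is fixed pointwise
  have hAcl : ∀ a : Fin n, cls (f (.inl (.inl a))) = cls (f (.inl (.inl ⟨0, hn1⟩))) :=
    fun a => cls_eq_of_iso f rfl
  have hA : ∀ a : Fin n, f (.inl (.inl a)) = .inl (.inl a) := by
    rcases hw0 : f (.inl (.inl ⟨0, hn1⟩)) with (x|x)|(x|x)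
    · -- into A: good
      intro a
      have hcl := hAcl a; rw [hw0] at hcl
      rcases hw : f (.inl (.inl a)) with (y|y)|(y|y) <;> rw [hw] at hcl <;> simp [cls] at hcl
      have h := hc (.inl (.inl a)); rw [hw] at h
      have hv := congrArg Fin.val h; simp [col] at hv
      rw [show y = a from Fin.ext hv]
    · -- into B: cardinality contradiction
      exfalso
      have hg : ∀ a : Fin n, ∃ k : Fin m, f (.inl (.inl a)) = .inl (.inr k) := by
        intro a
        have hcl := hAcl a; rw [hw0] at hcl
        rcases hw : f (.inl (.inl a)) with (y|y)|(y|y) <;> rw [hw] at hcl <;> simp [cls] at hcl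
        exact ⟨y, rfl⟩
      choose g hgs using hg
      have inj : Function.Injective g := by
        intro a b hab
        have : f (.inl (.inl a)) = f (.inl (.inl b)) := by rw [hgs a, hgs b, hab]
        simpa using f.injective this
      have := Fintype.card_le_of_injective g inj
      simp at this; omega
    · -- into A': injectivity contradiction
      exfalso
      have : f (.inl (.inl ⟨0, hn1⟩)) = f (.inr (.inl x)) := by rw [hw0, hA' x]
      simpa using f.injective this
    · -- into B': cardinality contradiction
      exfalso
      have hg : ∀ a : Fin n, ∃ k : Fin m', f (.inl (.inl a)) = .inr (.inr k) := by
        intro a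
        have hcl := hAcl a; rw [hw0] at hcl
        rcases hw : f (.inl (.inl a)) with (y|y)|(y|y) <;> rw [hw] at hcl <;> simp [cls] at hcl
        exact ⟨y, rfl⟩
      choose g hgs using hg
      have inj : Function.Injective g := by
        intro a b hab
        have : f (.inl (.inl a)) = f (.inl (.inl b)) := by rw [hgs a, hgs b, hab]
        simpa using f.injective this
      have := Fintype.card_le_of_injective g inj
      simp at this; omega
  -- images of B and B' are in B ∪ B'
  have hBim : ∀ b : Fin m, (∃ k : Fin m, f (.inl (.inr b)) = .inl (.inr k)) ∨
      (∃ k : Fin m', f (.inl (.inr b)) = .inr (.inr k)) := by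
    intro b
    rcases hw : f (.inl (.inr b)) with (y|y)|(y|y)
    · exfalso
      have : f (.inl (.inr b)) = f (.inl (.inl y)) := by rw [hw, hA y]
      simpa using f.injective this
    · exact Or.inl ⟨y, rfl⟩
    · exfalso
      have : f (.inl (.inr b)) = f (.inr (.inl y)) := by rw [hw, hA' y]
      simpa using f.injective this
    · exact Or.inr ⟨y, rfl⟩
  have hB'im : ∀ b : Fin m', (∃ k : Fin m, f (.inr (.inr b)) = .inl (.inr k)) ∨
      (∃ k : Fin m', f (.inr (.inr b)) = .inr (.inr k)) := by
    intro b
    rcases hw : f (.inr (.inr b)) with (y|y)|(y|y)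
    · exfalso
      have : f (.inr (.inr b)) = f (.inl (.inl y)) := by rw [hw, hA y]
      simpa using f.injective this
    · exact Or.inl ⟨y, rfl⟩
    · exfalso
      have : f (.inr (.inr b)) = f (.inr (.inl y)) := by rw [hw, hA' y]
      simpa using f.injective this
    · exact Or.inr ⟨y, rfl⟩
  -- B is fixed pointwise
  have hB : ∀ b : Fin m, f (.inl (.inr b)) = .inl (.inr b) := by
    intro b
    rcases hBim b with ⟨k, hk⟩ | ⟨k, hk⟩
    · have h := hc (.inl (.inr b)); rw [hk] at h
      have hv := congrArg Fin.val h; simp [col] at hv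
      rw [hk, show k = b from Fin.ext hv]
    · exfalso
      have hBB' : ∀ b2 : Fin m, ∃ j : Fin m', f (.inl (.inr b2)) = .inr (.inr j) := by
        intro b2
        rcases hBim b2 with ⟨k2, hk2⟩ | h
        · exfalso
          have := cls_eq_of_iso f (v := .inl (.inr b2)) (u := .inl (.inr b)) rfl
          rw [hk2, hk] at this; simp [cls] at this
        · exact h
      have hB'B : ∀ b2 : Fin m', ∃ j : Fin m, f (.inr (.inr b2)) = .inl (.inr j) := by
        intro b2
        rcases hB'im b2 with h | ⟨k2, hk2⟩
        · exact h
        · exfalso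
          rcases hw : f.symm (.inl (.inr b)) with (y|y)|(y|y) <;>
            [skip; skip; skip; skip] <;>
            · have hfw := f.apply_symm_apply (.inl (.inr b) : BV n m m')
              rw [hw] at hfw
              first
              | (rw [hA y] at hfw; simp at hfw)
              | (rw [hA' y] at hfw; simp at hfw)
              | (obtain ⟨j, hj⟩ := hBB' y; rw [hj] at hfw; simp at hfw)
              | (have hcl := cls_eq_of_iso f (v := .inr (.inr y)) (u := .inr (.inr b2)) rfl
                 rw [hfw, hk2] at hcl; simp [cls] at hcl)
      choose g hg using hBB'
      choose g' hg' using hB'B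
      have inj : Function.Injective g := by
        intro x y hxy
        have : f (.inl (.inr x)) = f (.inl (.inr y)) := by rw [hg x, hg y, hxy]
        simpa using f.injective this
      have inj' : Function.Injective g' := by
        intro x y hxy
        have : f (.inr (.inr x)) = f (.inr (.inr y)) := by rw [hg' x, hg' y, hxy]
        simpa using f.injective this
      have c1 := Fintype.card_le_of_injective g inj
      have c2 := Fintype.card_le_of_injective g' inj'
      simp at c1 c2; omega
  -- B' is fixed pointwise
  have hB' : ∀ b : Fin m', f (.inr (.inr b)) = .inr (.inr b) := by
    intro b
    rcases hB'im b with ⟨k, hk⟩ | ⟨k, hk⟩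
    · exfalso
      have : f (.inr (.inr b)) = f (.inl (.inr k)) := by rw [hk, hB k]
      simpa using f.injective this
    · have h := hc (.inr (.inr b)); rw [hk] at h
      have hv := congrArg Fin.val h; simp [col] at hv
      rw [hk, show k = b from Fin.ext hv]
  rintro ((a|b)|(a|b))
  · exact hA a
  · exact hB b
  · exact hA' a
  · exact hB' b

/-- Transposition of two same-colored vertices in one of the two `Fin n` parts. -/
lemma lower_swap {n m m' : ℕ} {d : ℕ} {c : BV n m m' → Fin d}
    (hP : ∀ f : JG n m m' ≃g JG n m m', (∀ v, c (f v) = c v) → ∀ v, f v = v)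
    (v1 v2 : BV n m m') (hcls : cls v1 = cls v2) (heq : c v1 = c v2) : v1 = v2 := by
  by_contra hne
  have hclse : ∀ v : BV n m m', cls (Equiv.swap v1 v2 v) = cls v := by
    intro v
    rcases eq_or_ne v v1 with rfl | hv1
    · rw [Equiv.swap_apply_left]; exact hcls.symm
    rcases eq_or_ne v v2 with rfl | hv2
    · rw [Equiv.swap_apply_right]; exact hcls
    · rw [Equiv.swap_apply_of_ne_of_ne hv1 hv2]
  have hpres : ∀ v, c (Equiv.swap v1 v2 v) = c v := by
    intro v
    rcases eq_or_ne v v1 with rfl | hv1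
    · rw [Equiv.swap_apply_left]; exact heq.symm
    rcases eq_or_ne v v2 with rfl | hv2
    · rw [Equiv.swap_apply_right]; exact heq
    · rw [Equiv.swap_apply_of_ne_of_ne hv1 hv2]
  have := hP (isoOfCls (Equiv.swap v1 v2) (fun v u => by rw [hclse, hclse])) hpres v1
  simp only [isoOfCls, RelIso.coe_fn_mk, Equiv.swap_apply_left] at this
  exact hne this.symm

lemma lower {n m m' : ℕ} (h1 : m < n) (h2 : m' < n) (h3 : m ≠ m') (d : ℕ)
    (hd : ∃ c : BV n m m' → Fin d, ∀ f : JG n m m' ≃g JG n m m',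
      (∀ v, c (f v) = c v) → ∀ v, f v = v) : n + 1 ≤ d := by
  obtain ⟨c, hP⟩ := hd
  by_contra hdn
  push_neg at hdn
  have hdn : d ≤ n := by omega
  have hn1 : 0 < n := by omega
  have hinjA : Function.Injective (fun a : Fin n => c (.inl (.inl a))) := by
    intro a b hab
    have := lower_swap hP (.inl (.inl a)) (.inl (.inl b)) rfl hab
    simpa using this
  have hinjA' : Function.Injective (fun a : Fin n => c (.inr (.inl a))) := by
    intro a b hab
    have := lower_swap hP (.inr (.inl a)) (.inr (.inl b)) rfl hab
    simpa using this
  -- hence d = n and both colorings are bijections; swap the two sides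
  have hnd : n ≤ d := by simpa using Fintype.card_le_of_injective _ hinjA
  have hdeq : d = n := le_antisymm hdn hnd
  subst hdeq
  let eA : Fin d ≃ Fin d := Equiv.ofBijective _ (Finite.injective_iff_bijective.mp hinjA)
  let eA' : Fin d ≃ Fin d := Equiv.ofBijective _ (Finite.injective_iff_bijective.mp hinjA')
  let σ : Fin d ≃ Fin d := eA.trans eA'.symm
  let e : BV d m m' ≃ BV d m m' :=
    { toFun := fun v => match v with
        | .inl (.inl a) => .inr (.inl (σ a))
        | .inl (.inr b) => .inl (.inr b)
        | .inr (.inl a) => .inl (.inl (σ.symm a))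
        | .inr (.inr b) => .inr (.inr b)
      invFun := fun v => match v with
        | .inl (.inl a) => .inr (.inl (σ a))
        | .inl (.inr b) => .inl (.inr b)
        | .inr (.inl a) => .inl (.inl (σ.symm a))
        | .inr (.inr b) => .inr (.inr b)
      left_inv := by rintro ((a|b)|(a|b)) <;> simp
      right_inv := by rintro ((a|b)|(a|b)) <;> simp }
  have hclse : ∀ v u : BV d m m', cls (e v) = cls (e u) ↔ cls v = cls u := by
    rintro ((a|b)|(a|b)) ((a'|b')|(a'|b')) <;> simp [e, cls] <;> decide
  have hpres : ∀ v, c (e v) = c v := by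
    rintro ((a|b)|(a|b))
    · show c (.inr (.inl (eA'.symm (eA a)))) = c (.inl (.inl a))
      calc c (.inr (.inl (eA'.symm (eA a)))) = eA' (eA'.symm (eA a)) := rfl
        _ = eA a := by rw [Equiv.apply_symm_apply]
        _ = c (.inl (.inl a)) := rfl
    · rfl
    · show c (.inl (.inl (eA.symm (eA' a)))) = c (.inr (.inl a))
      calc c (.inl (.inl (eA.symm (eA' a)))) = eA (eA.symm (eA' a)) := rfl
        _ = eA' a := by rw [Equiv.apply_symm_apply]
        _ = c (.inr (.inl a)) := rfl
    · rfl
  have := hP (isoOfCls e hclse) hpres (.inl (.inl ⟨0, hn1⟩))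
  simp only [isoOfCls, RelIso.coe_fn_mk] at this
  exact absurd this (by simp [e])


theorem distinguishingNumber_join_completeBipartite (n m m' : ℕ)
    (h1 : m < n) (h2 : m' < n) (h3 : m ≠ m') :
    distinguishingNumber (joinGraph (completeBipartiteGraph (Fin n) (Fin m))
      (completeBipartiteGraph (Fin n) (Fin m'))) = n + 1 := by
  have hmem : (n + 1) ∈ {d : ℕ | ∃ c : BV n m m' → Fin d, ∀ f : JG n m m' ≃g JG n m m',
      (∀ v, c (f v) = c v) → ∀ v, f v = v} := ⟨col n m m' h1 h2, mem_upper h1 h2 h3⟩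
  exact le_antisymm (Nat.sInf_le hmem)
    (le_csInf ⟨n + 1, hmem⟩ (fun d hd => lower h1 h2 h3 d hd))
end

section
/- For any graph G, D(G) ≤ D(G + G), where G + G is the join of G with a disjoint copy of itself. -/
open SimpleGraph

lemma join_mem_subset {V : Type*} (G : SimpleGraph V) (d : ℕ)
    (h : ∃ c : V ⊕ V → Fin d, ∀ f : joinGraph G G ≃g joinGraph G G,
      (∀ v, c (f v) = c v) → ∀ v, f v = v) :
    ∃ c : V → Fin d, ∀ f : G ≃g G, (∀ v, c (f v) = c v) → ∀ v, f v = v := by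
  obtain ⟨c, hc⟩ := h
  refine ⟨c ∘ Sum.inl, ?_⟩
  intro f hf
  let F : joinGraph G G ≃g joinGraph G G :=
    { toEquiv := Equiv.sumCongr f.toEquiv (Equiv.refl V)
      map_rel_iff' := by
        rintro (a|a) (b|b)
        · exact f.map_adj_iff
        · exact Iff.rfl
        · exact Iff.rfl
        · exact Iff.rfl }
  have hFc : ∀ v, c (F v) = c v := by
    rintro (v|v)
    · exact hf v
    · rfl
  intro v
  have h2 : Sum.inl (f v) = Sum.inl v := hc F hFc (Sum.inl v)
  exact Sum.inl.inj h2

lemma join_nonempty {V : Type*} (G : SimpleGraph V) (d : ℕ)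
    (h : ∃ c : V → Fin d, ∀ f : G ≃g G, (∀ v, c (f v) = c v) → ∀ v, f v = v) :
    ∃ c : V ⊕ V → Fin (d + d), ∀ f : joinGraph G G ≃g joinGraph G G,
      (∀ v, c (f v) = c v) → ∀ v, f v = v := by
  obtain ⟨c, hc⟩ := h
  refine ⟨fun x => finSumFinEquiv (Sum.map c c x), ?_⟩
  intro f hf
  have hinl : ∀ v : V, ∃ u, f (Sum.inl v) = Sum.inl u := by
    intro v
    rcases h' : f (Sum.inl v) with u | u
    · exact ⟨u, rfl⟩
    · exfalso
      have h2 := hf (Sum.inl v)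
      rw [h'] at h2
      have := finSumFinEquiv.injective h2
      simp at this
  have hinr : ∀ v : V, ∃ u, f (Sum.inr v) = Sum.inr u := by
    intro v
    rcases h' : f (Sum.inr v) with u | u
    · exfalso
      have h2 := hf (Sum.inr v)
      rw [h'] at h2
      have := finSumFinEquiv.injective h2
      simp at this
    · exact ⟨u, rfl⟩
  have hsinl : ∀ v : V, ∃ u, f.symm (Sum.inl v) = Sum.inl u := by
    intro v
    rcases h' : f.symm (Sum.inl v) with u | u
    · exact ⟨u, rfl⟩
    · exfalso
      obtain ⟨w, hw⟩ := hinr u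
      have : f (f.symm (Sum.inl v)) = Sum.inl v := f.apply_symm_apply _
      rw [h', hw] at this
      exact absurd this (by simp)
  have hsinr : ∀ v : V, ∃ u, f.symm (Sum.inr v) = Sum.inr u := by
    intro v
    rcases h' : f.symm (Sum.inr v) with u | u
    · exfalso
      obtain ⟨w, hw⟩ := hinl u
      have : f (f.symm (Sum.inr v)) = Sum.inr v := f.apply_symm_apply _
      rw [h', hw] at this
      exact absurd this (by simp)
    · exact ⟨u, rfl⟩
  -- left copy
  let g : V → V := fun v => Sum.elim id id (f (Sum.inl v))
  let g' : V → V := fun v => Sum.elim id id (f.symm (Sum.inl v))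
  have hg : ∀ v, f (Sum.inl v) = Sum.inl (g v) := by
    intro v; obtain ⟨u, hu⟩ := hinl v; simp [g, hu]
  have hg' : ∀ v, f.symm (Sum.inl v) = Sum.inl (g' v) := by
    intro v; obtain ⟨u, hu⟩ := hsinl v; simp [g', hu]
  have hli : ∀ v, g' (g v) = v := by
    intro v
    have : f.symm (Sum.inl (g v)) = Sum.inl v := by rw [← hg v]; exact f.symm_apply_apply _
    have h2 := hg' (g v)
    rw [this] at h2
    exact (Sum.inl.inj h2).symm
  have hri : ∀ v, g (g' v) = v := by
    intro v
    have : f (Sum.inl (g' v)) = Sum.inl v := by rw [← hg' v]; exact f.apply_symm_apply _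
    have h2 := hg (g' v)
    rw [this] at h2
    exact (Sum.inl.inj h2).symm
  let eG : G ≃g G :=
    { toFun := g, invFun := g', left_inv := hli, right_inv := hri
      map_rel_iff' := by
        intro a b
        have : (joinGraph G G).Adj (Sum.inl (g a)) (Sum.inl (g b)) ↔
            (joinGraph G G).Adj (Sum.inl a) (Sum.inl b) := by
          rw [← hg a, ← hg b]; exact f.map_adj_iff
        exact this }
  have hcg : ∀ v, c (g v) = c v := by
    intro v
    have h2 := hf (Sum.inl v)
    rw [hg v] at h2
    have := finSumFinEquiv.injective h2
    simpa using this
  have hgid : ∀ v, g v = v := hc eG hcg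
  -- right copy
  let r : V → V := fun v => Sum.elim id id (f (Sum.inr v))
  let r' : V → V := fun v => Sum.elim id id (f.symm (Sum.inr v))
  have hr : ∀ v, f (Sum.inr v) = Sum.inr (r v) := by
    intro v; obtain ⟨u, hu⟩ := hinr v; simp [r, hu]
  have hr' : ∀ v, f.symm (Sum.inr v) = Sum.inr (r' v) := by
    intro v; obtain ⟨u, hu⟩ := hsinr v; simp [r', hu]
  have hlir : ∀ v, r' (r v) = v := by
    intro v
    have : f.symm (Sum.inr (r v)) = Sum.inr v := by rw [← hr v]; exact f.symm_apply_apply _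
    have h2 := hr' (r v)
    rw [this] at h2
    exact (Sum.inr.inj h2).symm
  have hrir : ∀ v, r (r' v) = v := by
    intro v
    have : f (Sum.inr (r' v)) = Sum.inr v := by rw [← hr' v]; exact f.apply_symm_apply _
    have h2 := hr (r' v)
    rw [this] at h2
    exact (Sum.inr.inj h2).symm
  let eGr : G ≃g G :=
    { toFun := r, invFun := r', left_inv := hlir, right_inv := hrir
      map_rel_iff' := by
        intro a b
        have : (joinGraph G G).Adj (Sum.inr (r a)) (Sum.inr (r b)) ↔
            (joinGraph G G).Adj (Sum.inr a) (Sum.inr b) := by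
          rw [← hr a, ← hr b]; exact f.map_adj_iff
        exact this }
  have hcr : ∀ v, c (r v) = c v := by
    intro v
    have h2 := hf (Sum.inr v)
    rw [hr v] at h2
    have := finSumFinEquiv.injective h2
    simpa using this
  have hrid : ∀ v, r v = v := hc eGr hcr
  rintro (v|v)
  · rw [hg v, hgid v]
  · rw [hr v, hrid v]

theorem distinguishingNumber_le_join_self {V : Type*} (G : SimpleGraph V) :
    distinguishingNumber G ≤ distinguishingNumber (joinGraph G G) := by
  classical
  unfold distinguishingNumber
  set S := {d : ℕ | ∃ c : V → Fin d, ∀ f : G ≃g G, (∀ v, c (f v) = c v) → ∀ v, f v = v} with hSdef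
  set T := {d : ℕ | ∃ c : V ⊕ V → Fin d, ∀ f : joinGraph G G ≃g joinGraph G G,
      (∀ v, c (f v) = c v) → ∀ v, f v = v} with hTdef
  by_cases hS : S.Nonempty
  · obtain ⟨d, hd⟩ := hS
    have hT : T.Nonempty := ⟨d + d, join_nonempty G d hd⟩
    have hmem : sInf T ∈ T := Nat.sInf_mem hT
    exact Nat.sInf_le (join_mem_subset G _ hmem)
  · rw [Set.not_nonempty_iff_eq_empty] at hS
    rw [hS, Nat.sInf_empty]
    exact Nat.zero_le _
end

section
/- For every n ≥ 2, the distinguishing number of the join K_{1,n} + K_{1,n} of two star graphs equals n + 1. -/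
open SimpleGraph

section AuxStar

open Sum

abbrev SGr (n : ℕ) := joinGraph (completeBipartiteGraph (Fin 1) (Fin n))
  (completeBipartiteGraph (Fin 1) (Fin n))

/-- Permuting leaves on each side is an automorphism. -/
def leavesIso {n : ℕ} (σ τ : Fin n ≃ Fin n) : SGr n ≃g SGr n where
  toEquiv := Equiv.sumCongr (Equiv.sumCongr (Equiv.refl _) σ) (Equiv.sumCongr (Equiv.refl _) τ)
  map_rel_iff' := by
    rintro (⟨a|i⟩|⟨a|i⟩) (⟨b|j⟩|⟨b|j⟩) <;>
      simp [joinGraph, completeBipartiteGraph]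

/-- The equivalence swapping the two leaf-sides via σ, fixing both centers. -/
def crossEquiv {n : ℕ} (σ : Fin n ≃ Fin n) :
    ((Fin 1 ⊕ Fin n) ⊕ (Fin 1 ⊕ Fin n)) ≃ ((Fin 1 ⊕ Fin n) ⊕ (Fin 1 ⊕ Fin n)) where
  toFun := fun x => match x with
    | .inl (.inl a) => .inl (.inl a)
    | .inl (.inr i) => .inr (.inr (σ i))
    | .inr (.inl a) => .inr (.inl a)
    | .inr (.inr j) => .inl (.inr (σ.symm j))
  invFun := fun x => match x with
    | .inl (.inl a) => .inl (.inl a)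
    | .inl (.inr i) => .inr (.inr (σ i))
    | .inr (.inl a) => .inr (.inl a)
    | .inr (.inr j) => .inl (.inr (σ.symm j))
  left_inv := by rintro (⟨a|i⟩|⟨a|i⟩) <;> simp
  right_inv := by rintro (⟨a|i⟩|⟨a|i⟩) <;> simp

/-- Swapping the two leaf-sides (fixing centers) is an automorphism. -/
def crossIso {n : ℕ} (σ : Fin n ≃ Fin n) : SGr n ≃g SGr n where
  toEquiv := crossEquiv σ
  map_rel_iff' := by
    rintro (⟨a|i⟩|⟨a|i⟩) (⟨b|j⟩|⟨b|j⟩) <;>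
      simp [crossEquiv, joinGraph, completeBipartiteGraph]

/-- The distinguishing coloring with n+1 colors. -/
def goodC (n : ℕ) : ((Fin 1 ⊕ Fin n) ⊕ (Fin 1 ⊕ Fin n)) → Fin (n+1)
  | .inl (.inl _) => 0
  | .inl (.inr i) => i.castSucc
  | .inr (.inl _) => Fin.last n
  | .inr (.inr j) => j.succ

lemma center1_univ {n : ℕ} (w : (Fin 1 ⊕ Fin n) ⊕ (Fin 1 ⊕ Fin n))
    (hw : w ≠ .inl (.inl 0)) : (SGr n).Adj (.inl (.inl 0)) w := by
  rcases w with (⟨a|i⟩|⟨a|i⟩)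
  · exact absurd (by rw [Fin.fin_one_eq_zero a]) hw
  · simp [joinGraph, completeBipartiteGraph]
  · simp [joinGraph]
  · simp [joinGraph]

lemma center2_univ {n : ℕ} (w : (Fin 1 ⊕ Fin n) ⊕ (Fin 1 ⊕ Fin n))
    (hw : w ≠ .inr (.inl 0)) : (SGr n).Adj (.inr (.inl 0)) w := by
  rcases w with (⟨a|i⟩|⟨a|i⟩)
  · simp [joinGraph]
  · simp [joinGraph]
  · exact absurd (by rw [Fin.fin_one_eq_zero a]) hw
  · simp [joinGraph, completeBipartiteGraph]


lemma not_adj_leaf1 {n : ℕ} (i j : Fin n) :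
    ¬ (SGr n).Adj (.inl (.inr i)) (.inl (.inr j)) := by
  simp [joinGraph, completeBipartiteGraph]

lemma not_adj_leaf2 {n : ℕ} (i j : Fin n) :
    ¬ (SGr n).Adj (.inr (.inr i)) (.inr (.inr j)) := by
  simp [joinGraph, completeBipartiteGraph]

lemma adj_cross {n : ℕ} (x y : Fin 1 ⊕ Fin n) : (SGr n).Adj (.inr x) (.inl y) := by
  simp [joinGraph]

lemma goodC_distinguishing {n : ℕ} (hn : 2 ≤ n) (f : SGr n ≃g SGr n)
    (hf : ∀ v, goodC n (f v) = goodC n v) : ∀ v, f v = v := by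
  haveI : Nontrivial (Fin n) := Fin.nontrivial_iff_two_le.mpr hn
  haveI : NeZero n := ⟨by omega⟩
  have hlast : (Fin.last n : Fin (n+1)) ≠ 0 := by
    simp [Fin.ext_iff]; omega
  have key : ∀ v, (∀ w, w ≠ v → (SGr n).Adj v w) →
      (∀ w, w ≠ f v → (SGr n).Adj (f v) w) := by
    intro v hv w hw
    have h1 : f.symm w ≠ v := by
      intro h; apply hw; rw [← h, RelIso.apply_symm_apply]
    have h3 : (SGr n).Adj (f v) (f (f.symm w)) := f.map_rel_iff.mpr (hv _ h1)
    rwa [RelIso.apply_symm_apply] at h3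
  have univ_center : ∀ v, (∀ w, w ≠ v → (SGr n).Adj v w) →
      v = .inl (.inl 0) ∨ v = .inr (.inl 0) := by
    intro v hv
    rcases v with (⟨a|i⟩|⟨a|i⟩)
    · left; rw [Fin.fin_one_eq_zero a]
    · exfalso
      obtain ⟨j, hj⟩ := exists_ne i
      exact not_adj_leaf1 i j (hv (.inl (.inr j)) (by simp [hj]))
    · right; rw [Fin.fin_one_eq_zero a]
    · exfalso
      obtain ⟨j, hj⟩ := exists_ne i
      exact not_adj_leaf2 i j (hv (.inr (.inr j)) (by simp [hj]))
  have hfc1 : f (.inl (.inl 0)) = .inl (.inl 0) := by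
    rcases univ_center _ (key _ (fun w hw => center1_univ w hw)) with h | h
    · exact h
    · exfalso
      have := hf (.inl (.inl 0))
      rw [h] at this
      exact hlast (by simpa [goodC] using this)
  have hfc2 : f (.inr (.inl 0)) = .inr (.inl 0) := by
    rcases univ_center _ (key _ (fun w hw => center2_univ w hw)) with h | h
    · exfalso
      have := hf (.inr (.inl 0))
      rw [h] at this
      have : (0 : Fin (n+1)) = Fin.last n := by simpa [goodC] using this
      exact hlast this.symm
    · exact h
  have hinj := f.toEquiv.injective
  have h10 : f (.inl (.inr (0 : Fin n))) = .inl (.inr 0) := by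
    have hcol := hf (.inl (.inr (0 : Fin n)))
    rcases hv : f (.inl (.inr (0 : Fin n))) with (⟨a|k⟩|⟨a|k⟩)
    · exfalso
      rw [Fin.fin_one_eq_zero a, ← hfc1] at hv
      simpa using hinj hv
    · rw [hv] at hcol
      simp only [goodC, Fin.castSucc_zero] at hcol
      have : k = 0 := by
        have := Fin.castSucc_injective n (by simpa using hcol)
        simpa using this
      rw [this]
    · exfalso
      rw [Fin.fin_one_eq_zero a, ← hfc2] at hv
      simpa using hinj hv
    · exfalso
      rw [hv] at hcol
      simp only [goodC, Fin.castSucc_zero] at hcol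
      exact Fin.succ_ne_zero k hcol
  have h1i : ∀ i : Fin n, f (.inl (.inr i)) = .inl (.inr i) := by
    intro i
    by_cases hi : i = 0
    · rw [hi]; exact h10
    have hcol := hf (.inl (.inr i))
    have hnadj : ¬ (SGr n).Adj (f (.inl (.inr i))) (.inl (.inr (0 : Fin n))) := by
      rw [← h10]
      exact fun h => not_adj_leaf1 i 0 (f.map_rel_iff.mp h)
    rcases hv : f (.inl (.inr i)) with (⟨a|k⟩|⟨a|k⟩)
    · exfalso
      rw [Fin.fin_one_eq_zero a, ← hfc1] at hv
      simpa using hinj hv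
    · rw [hv] at hcol
      simp only [goodC] at hcol
      rw [Fin.castSucc_inj.mp hcol]
    · exfalso
      rw [Fin.fin_one_eq_zero a, ← hfc2] at hv
      simpa using hinj hv
    · exfalso
      rw [hv] at hnadj
      exact hnadj (adj_cross _ _)
  have h2j : ∀ j : Fin n, f (.inr (.inr j)) = .inr (.inr j) := by
    intro j
    have hcol := hf (.inr (.inr j))
    rcases hv : f (.inr (.inr j)) with (⟨a|k⟩|⟨a|k⟩)
    · exfalso
      rw [Fin.fin_one_eq_zero a, ← hfc1] at hv
      simpa using hinj hv
    · exfalso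
      rw [← h1i k] at hv
      simpa using hinj hv
    · exfalso
      rw [Fin.fin_one_eq_zero a, ← hfc2] at hv
      simpa using hinj hv
    · rw [hv] at hcol
      simp only [goodC] at hcol
      rw [Fin.succ_inj.mp hcol]
  rintro (⟨a|i⟩|⟨a|i⟩)
  · rw [Fin.fin_one_eq_zero a]; exact hfc1
  · exact h1i i
  · rw [Fin.fin_one_eq_zero a]; exact hfc2
  · exact h2j i

end AuxStar

theorem distinguishingNumber_join_star (n : ℕ) (hn : 2 ≤ n) :
    distinguishingNumber (joinGraph (completeBipartiteGraph (Fin 1) (Fin n))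
      (completeBipartiteGraph (Fin 1) (Fin n))) = n + 1 := by
  haveI : NeZero n := ⟨by omega⟩
  have hmem : (n+1) ∈ {d : ℕ | ∃ c : ((Fin 1 ⊕ Fin n) ⊕ (Fin 1 ⊕ Fin n)) → Fin d,
      ∀ f : SGr n ≃g SGr n, (∀ v, c (f v) = c v) → ∀ v, f v = v} :=
    ⟨goodC n, fun f hf => goodC_distinguishing hn f hf⟩
  apply le_antisymm
  · exact Nat.sInf_le hmem
  · refine le_csInf ⟨_, hmem⟩ ?_
    rintro d ⟨c, hc⟩
    by_contra hd
    push_neg at hd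
    have hdn : d ≤ n := by omega
    by_cases h1 : ∃ i j : Fin n, i ≠ j ∧ c (.inl (.inr i)) = c (.inl (.inr j))
    · obtain ⟨i, j, hij, hcij⟩ := h1
      have hpres : ∀ v, c ((leavesIso (Equiv.swap i j) (Equiv.refl (Fin n))) v) = c v := by
        rintro (⟨a|k⟩|⟨a|k⟩)
        · rfl
        · show c (.inl (.inr (Equiv.swap i j k))) = c (.inl (.inr k))
          rcases eq_or_ne k i with rfl | hki
          · rw [Equiv.swap_apply_left]; exact hcij.symm
          rcases eq_or_ne k j with rfl | hkj
          · rw [Equiv.swap_apply_right]; exact hcij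
          · rw [Equiv.swap_apply_of_ne_of_ne hki hkj]
        · rfl
        · rfl
      have := hc (leavesIso (Equiv.swap i j) (Equiv.refl (Fin n))) hpres (.inl (.inr i))
      have h2 : (Sum.inl (Sum.inr (Equiv.swap i j i)) :
          (Fin 1 ⊕ Fin n) ⊕ (Fin 1 ⊕ Fin n)) = .inl (.inr i) := this
      rw [Equiv.swap_apply_left] at h2
      have : j = i := by simpa using h2
      exact hij this.symm
    by_cases h2 : ∃ i j : Fin n, i ≠ j ∧ c (.inr (.inr i)) = c (.inr (.inr j))
    · obtain ⟨i, j, hij, hcij⟩ := h2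
      have hpres : ∀ v, c ((leavesIso (Equiv.refl (Fin n)) (Equiv.swap i j)) v) = c v := by
        rintro (⟨a|k⟩|⟨a|k⟩)
        · rfl
        · rfl
        · rfl
        · show c (.inr (.inr (Equiv.swap i j k))) = c (.inr (.inr k))
          rcases eq_or_ne k i with rfl | hki
          · rw [Equiv.swap_apply_left]; exact hcij.symm
          rcases eq_or_ne k j with rfl | hkj
          · rw [Equiv.swap_apply_right]; exact hcij
          · rw [Equiv.swap_apply_of_ne_of_ne hki hkj]
      have := hc (leavesIso (Equiv.refl (Fin n)) (Equiv.swap i j)) hpres (.inr (.inr i))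
      have h3 : (Sum.inr (Sum.inr (Equiv.swap i j i)) :
          (Fin 1 ⊕ Fin n) ⊕ (Fin 1 ⊕ Fin n)) = .inr (.inr i) := this
      rw [Equiv.swap_apply_left] at h3
      have : j = i := by simpa using h3
      exact hij this.symm
    push_neg at h1 h2
    have inj1 : Function.Injective (fun i : Fin n => c (.inl (.inr i))) := by
      intro i j h
      by_contra hne
      exact h1 i j hne h
    have inj2 : Function.Injective (fun i : Fin n => c (.inr (.inr i))) := by
      intro i j h
      by_contra hne
      exact h2 i j hne h
    have hcard : n ≤ d := by
      simpa using Fintype.card_le_of_injective _ inj1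
    have hdeq : d = n := le_antisymm hdn hcard
    have bij1 : Function.Bijective (fun i : Fin n => c (.inl (.inr i))) :=
      (Fintype.bijective_iff_injective_and_card _).mpr ⟨inj1, by simp [hdeq]⟩
    have bij2 : Function.Bijective (fun i : Fin n => c (.inr (.inr i))) :=
      (Fintype.bijective_iff_injective_and_card _).mpr ⟨inj2, by simp [hdeq]⟩
    set e1 := Equiv.ofBijective _ bij1 with he1
    set e2 := Equiv.ofBijective _ bij2 with he2
    set σ : Fin n ≃ Fin n := e1.trans e2.symm with hσdef
    have hσ : ∀ i, c (.inr (.inr (σ i))) = c (.inl (.inr i)) := by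
      intro i
      have : e2 (σ i) = e1 i := e2.apply_symm_apply (e1 i)
      exact this
    have hσ' : ∀ j, c (.inl (.inr (σ.symm j))) = c (.inr (.inr j)) := by
      intro j
      have : e1 (σ.symm j) = e2 j := e1.apply_symm_apply (e2 j)
      exact this
    have hpres : ∀ v, c ((crossIso σ) v) = c v := by
      rintro (⟨a|k⟩|⟨a|k⟩)
      · rfl
      · exact hσ k
      · rfl
      · exact hσ' k
    have := hc (crossIso σ) hpres (.inl (.inr (0 : Fin n)))
    have h4 : (Sum.inr (Sum.inr (σ 0)) : (Fin 1 ⊕ Fin n) ⊕ (Fin 1 ⊕ Fin n)) =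
        .inl (.inr 0) := this
    simp at h4
end

section
/- Every graph G of order n ≥ 7 that has a Hamiltonian path satisfies D'(G) ≤ 2. -/
open SimpleGraph

namespace DI2
variable {V : Type*}

lemma chase (f : V → V) (hfinj : Function.Injective f) (R : V → V → Prop)
    (hR : ∀ a b, R a b → R (f a) (f b))
    (x y : ℕ → V) (T : ℕ) (h0 : f (x 0) = y 0) (h1 : f (x 1) = y 1)
    (hx : ∀ t, t < T → R (x t) (x (t+1)))
    (hy : ∀ t, 1 ≤ t → t < T → ∀ z, R (y t) z → z = y (t-1) ∨ z = y (t+1))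
    (hxne : ∀ t, 1 ≤ t → t < T → x (t-1) ≠ x (t+1)) :
    ∀ t, t ≤ T → f (x t) = y t := by
  intro t
  induction t using Nat.strong_induction_on with
  | _ t ih =>
    match t with
    | 0 => intro _; exact h0
    | 1 => intro _; exact h1
    | (s+2) =>
      intro hs
      have hRs : R (y (s+1)) (f (x (s+2))) := by
        have := hR _ _ (hx (s+1) (by omega))
        rwa [ih (s+1) (by omega) (by omega)] at this
      rcases hy (s+1) (by omega) (by omega) _ hRs with h | h
      · exfalso
        have hs' : f (x s) = y s := ih s (by omega) (by omega)
        have : f (x (s+2)) = f (x s) := by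
          rw [hs']; simpa using h
        have := hfinj this
        exact hxne (s+1) (by omega) (by omega) (by simpa using this.symm)
      · simpa using h

/-- If `b` has at most one red neighbour, then so does `f b`. -/

lemma pull_unique {R : V → V → Prop} (f : V → V) (hsurj : Function.Surjective f)
    (hR : ∀ a b, R a b ↔ R (f a) (f b)) {b z0 : V}
    (hb : ∀ z, R b z → z = z0) {z1 z2 : V} (h1 : R (f b) z1) (h2 : R (f b) z2) :
    z1 = z2 := by
  obtain ⟨x1, rfl⟩ := hsurj z1
  obtain ⟨x2, rfl⟩ := hsurj z2
  have e1 : x1 = z0 := hb _ ((hR b x1).2 h1)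
  have e2 : x2 = z0 := hb _ ((hR b x2).2 h2)
  rw [e1, e2]

def PathP {V : Type*} (w : ℕ → V) (lo hi : ℕ) : Sym2 V → Prop :=
  fun e => ∃ i, lo ≤ i ∧ i + 1 ≤ hi ∧ e = s(w i, w (i+1))

lemma pathIntro {V : Type*} (w : ℕ → V) {lo hi : ℕ} {i : ℕ} (h1 : lo ≤ i) (h2 : i + 1 ≤ hi) :
    PathP w lo hi s(w i, w (i+1)) := ⟨i, h1, h2, rfl⟩

lemma pathElim {V : Type*} {n : ℕ} {w : ℕ → V}
    (winj : ∀ i j, i < n → j < n → w i = w j → i = j)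
    {lo hi : ℕ} (hhi : hi + 1 ≤ n) :
    ∀ j z, j < n → PathP w lo hi s(w j, z) →
      (lo + 1 ≤ j ∧ j ≤ hi ∧ z = w (j-1)) ∨ (lo ≤ j ∧ j + 1 ≤ hi ∧ z = w (j+1)) := by
  intro j z hj ⟨i, h1, h2, heq⟩
  rcases Sym2.eq_iff.1 heq with ⟨ha, hb⟩ | ⟨ha, hb⟩
  · have : j = i := winj _ _ hj (by omega) ha
    subst this
    exact Or.inr ⟨h1, h2, hb⟩
  · have : j = i + 1 := winj _ _ hj (by omega) ha
    have hi' : i = j - 1 := by omega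
    subst hi'
    exact Or.inl ⟨by omega, by omega, hb⟩

def GoodP {V : Type*} (G : SimpleGraph V) : Prop :=
  ∃ P : Sym2 V → Prop, (∀ a b, P s(a,b) → G.Adj a b) ∧
    ∀ (f : V ≃ V), (∀ a b, G.Adj a b ↔ G.Adj (f a) (f b)) →
      (∀ a b, P s(a,b) ↔ P s(f a, f b)) → ∀ x, f x = x

lemma good_le {G : SimpleGraph V}
    (h : GoodP G) :
    distinguishingIndex G ≤ 2 := by
  classical
  obtain ⟨P, hPE, hkill⟩ := h
  apply Nat.sInf_le
  refine ⟨fun e => if P e then (0 : Fin 2) else 1, ?_⟩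
  intro f hf
  have hadj : ∀ a b, G.Adj a b ↔ G.Adj (f a) (f b) := by
    intro a b; exact (f.map_adj_iff).symm
  have hiff : ∀ a b, P s(a,b) ↔ P s(f a, f b) := by
    intro a b
    constructor
    · intro h
      have he : (if P s(f a, f b) then (0:Fin 2) else 1) = (if P s(a,b) then (0:Fin 2) else 1) := by
        have h' := hf s(a,b) (G.mem_edgeSet.2 (hPE a b h))
        simp only [Sym2.map_pair_eq] at h'
        convert h' using 2
      by_contra hq
      rw [if_neg hq, if_pos h] at he
      exact absurd he (by decide)
    · intro h
      have hab : G.Adj a b := (hadj a b).2 (hPE _ _ h)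
      have he : (if P s(f a, f b) then (0:Fin 2) else 1) = (if P s(a,b) then (0:Fin 2) else 1) := by
        have h' := hf s(a,b) (G.mem_edgeSet.2 hab)
        simp only [Sym2.map_pair_eq] at h'
        convert h' using 2
      by_contra hq
      rw [if_pos h, if_neg hq] at he
      exact absurd he (by decide)
  exact hkill f.toEquiv hadj hiff

variable {G : SimpleGraph V} {n : ℕ} {w : ℕ → V}

lemma case1 (hn : 7 ≤ n)
    (winj : ∀ i j, i < n → j < n → w i = w j → i = j)
    (wsurj : ∀ a : V, ∃ i, i < n ∧ w i = a)
    (hadj : ∀ i, i + 2 ≤ n → G.Adj (w i) (w (i+1)))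
    (hρ : ¬ ∀ i j, i < n → j < n →
      (G.Adj (w i) (w j) ↔ G.Adj (w (n-1-i)) (w (n-1-j)))) :
    GoodP G := by
  refine ⟨PathP w 0 (n-1), ?_, ?_⟩
  · rintro a b ⟨i, -, h2, heq⟩
    rcases Sym2.eq_iff.1 heq with ⟨rfl, rfl⟩ | ⟨rfl, rfl⟩
    · exact hadj i (by omega)
    · exact (hadj i (by omega)).symm
  · intro f hfadj hfP
    have hElim := pathElim winj (lo := 0) (hi := n-1) (by omega)
    have hsym : ∀ a b, PathP w 0 (n-1) s(a,b) → PathP w 0 (n-1) s(b,a) := by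
      intro a b h; rwa [Sym2.eq_swap]
    have uniq0 : ∀ z, PathP w 0 (n-1) s(w 0, z) → z = w 1 := by
      intro z h
      rcases hElim 0 z (by omega) h with ⟨h1, -, -⟩ | ⟨-, -, h3⟩
      · omega
      · simpa using h3
    have uniqN : ∀ z, PathP w 0 (n-1) s(w (n-1), z) → z = w (n-2) := by
      intro z h
      rcases hElim (n-1) z (by omega) h with ⟨-, -, h3⟩ | ⟨-, h2, -⟩
      · have e : n - 1 - 1 = n - 2 := by omega
        rwa [e] at h3
      · omega
    have hf0 : f (w 0) = w 0 ∨ f (w 0) = w (n-1) := by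
      obtain ⟨j, hj, hfw⟩ := wsurj (f (w 0))
      by_contra hcon
      push_neg at hcon
      have hj0 : j ≠ 0 := fun h => hcon.1 (by rw [← hfw, h])
      have hjN : j ≠ n-1 := fun h => hcon.2 (by rw [← hfw, h])
      have h1 : PathP w 0 (n-1) s(w j, w (j-1)) := by
        apply hsym
        have := pathIntro w (lo := 0) (hi := n-1) (i := j-1) (by omega) (by omega)
        have e : j - 1 + 1 = j := by omega
        rwa [e] at this
      have h2 : PathP w 0 (n-1) s(w j, w (j+1)) :=
        pathIntro w (by omega) (by omega)
      rw [hfw] at h1 h2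
      have := pull_unique f f.surjective hfP uniq0 h1 h2
      have := winj _ _ (by omega) (by omega) this
      omega
    have hchase : ∀ (y : ℕ → V), f (w 0) = y 0 → f (w 1) = y 1 →
        (∀ t, 1 ≤ t → t < n-1 → ∀ z, PathP w 0 (n-1) s(y t, z) → z = y (t-1) ∨ z = y (t+1)) →
        ∀ t, t ≤ n-1 → f (w t) = y t := by
      intro y h0 h1 hy
      apply chase f f.injective (fun a b => PathP w 0 (n-1) s(a,b))
        (fun a b h => (hfP a b).1 h) (fun t => w t) y (n-1) h0 h1
      · intro t ht
        exact pathIntro w (by omega) (by omega)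
      · exact hy
      · intro t ht1 ht2 he
        have := winj _ _ (by omega) (by omega) he
        omega
    rcases hf0 with hA | hB
    · have h1 : f (w 1) = w 1 := by
        have hr : PathP w 0 (n-1) s(w 0, w 1) := by
          simpa using pathIntro w (lo := 0) (hi := n-1) (i := 0) (by omega) (by omega)
        have := (hfP _ _).1 hr
        rw [hA] at this
        exact uniq0 _ this
      have hy1 : ∀ t, 1 ≤ t → t < n-1 → ∀ z, PathP w 0 (n-1) s(w t, z) → z = w (t-1) ∨ z = w (t+1) := by
        intro t ht1 ht2 z hz
        rcases hElim t z (by omega) hz with ⟨-, -, h3⟩ | ⟨-, -, h3⟩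
        · exact Or.inl h3
        · exact Or.inr h3
      have hfix := hchase (fun t => w t) hA h1 hy1
      intro x
      obtain ⟨j, hj, rfl⟩ := wsurj x
      exact hfix j (by omega)
    · have h1 : f (w 1) = w (n-2) := by
        have hr : PathP w 0 (n-1) s(w 0, w 1) := by
          simpa using pathIntro w (lo := 0) (hi := n-1) (i := 0) (by omega) (by omega)
        have := (hfP _ _).1 hr
        rw [hB] at this
        exact uniqN _ this
      have hy1 : ∀ t, 1 ≤ t → t < n-1 → ∀ z, PathP w 0 (n-1) s(w (n-1-t), z) → z = w (n-1-(t-1)) ∨ z = w (n-1-(t+1)) := by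
        intro t ht1 ht2 z hz
        rcases hElim (n-1-t) z (by omega) hz with ⟨-, -, h3⟩ | ⟨-, -, h3⟩
        · refine Or.inr ?_
          have e : n - 1 - t - 1 = n - 1 - (t+1) := by omega
          rwa [e] at h3
        · refine Or.inl ?_
          have e : n - 1 - t + 1 = n - 1 - (t-1) := by omega
          rwa [e] at h3
      have hfix := hchase (fun t => w (n-1-t)) (by simpa using hB)
        (by show f (w 1) = w (n-1-1); rw [show n-1-1 = n-2 by omega]; exact h1) hy1
      have key : ∀ i j, i < n → j < n →
          (G.Adj (w i) (w j) ↔ G.Adj (w (n-1-i)) (w (n-1-j))) := by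
        intro i j hi hj
        have e1 := hfix i (by omega)
        have e2 := hfix j (by omega)
        rw [← e1, ← e2]
        exact hfadj (w i) (w j)
      exact (hρ key).elim

lemma case2 (hn : 7 ≤ n)
    (winj : ∀ i j, i < n → j < n → w i = w j → i = j)
    (wsurj : ∀ a : V, ∃ i, i < n ∧ w i = a)
    (hadj : ∀ i, i + 2 ≤ n → G.Adj (w i) (w (i+1)))
    (hσ : ¬ ∀ i j, i < n → j < n →
      (G.Adj (w i) (w j) ↔ G.Adj (w (if i = 0 then 0 else n - i)) (w (if j = 0 then 0 else n - j)))) :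
    GoodP G := by
  refine ⟨PathP w 1 (n-1), ?_, ?_⟩
  · rintro a b ⟨i, -, h2, heq⟩
    rcases Sym2.eq_iff.1 heq with ⟨rfl, rfl⟩ | ⟨rfl, rfl⟩
    · exact hadj i (by omega)
    · exact (hadj i (by omega)).symm
  · intro f hfadj hfP
    have hElim := pathElim winj (lo := 1) (hi := n-1) (by omega)
    have hsym : ∀ a b, PathP w 1 (n-1) s(a,b) → PathP w 1 (n-1) s(b,a) := by
      intro a b h; rwa [Sym2.eq_swap]
    have empty0 : ∀ z, PathP w 1 (n-1) s(w 0, z) → False := by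
      intro z h
      rcases hElim 0 z (by omega) h with ⟨h1, -, -⟩ | ⟨h1, -, -⟩ <;> omega
    have uniq1 : ∀ z, PathP w 1 (n-1) s(w 1, z) → z = w 2 := by
      intro z h
      rcases hElim 1 z (by omega) h with ⟨h1, -, -⟩ | ⟨-, -, h3⟩
      · omega
      · simpa using h3
    have uniqN : ∀ z, PathP w 1 (n-1) s(w (n-1), z) → z = w (n-2) := by
      intro z h
      rcases hElim (n-1) z (by omega) h with ⟨-, -, h3⟩ | ⟨-, h2, -⟩
      · have e : n - 1 - 1 = n - 2 := by omega
        rwa [e] at h3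
      · omega
    have hf0 : f (w 0) = w 0 := by
      obtain ⟨j, hj, hfw⟩ := wsurj (f (w 0))
      by_contra hcon
      have hj0 : j ≠ 0 := fun h => hcon (by rw [← hfw, h])
      have hnbr : ∃ z, PathP w 1 (n-1) s(w j, z) := by
        rcases Nat.lt_or_ge j (n-1) with h | h
        · exact ⟨w (j+1), pathIntro w (by omega) (by omega)⟩
        · refine ⟨w (j-1), hsym _ _ ?_⟩
          have := pathIntro w (lo := 1) (hi := n-1) (i := j-1) (by omega) (by omega)
          have e : j - 1 + 1 = j := by omega
          rwa [e] at this
      obtain ⟨z, hz⟩ := hnbr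
      rw [hfw] at hz
      obtain ⟨x, rfl⟩ := f.surjective z
      exact empty0 x ((hfP _ _).2 hz)
    have hf1 : f (w 1) = w 1 ∨ f (w 1) = w (n-1) := by
      obtain ⟨j, hj, hfw⟩ := wsurj (f (w 1))
      by_contra hcon
      push_neg at hcon
      have hj1 : j ≠ 1 := fun h => hcon.1 (by rw [← hfw, h])
      have hjN : j ≠ n-1 := fun h => hcon.2 (by rw [← hfw, h])
      have hj0 : j ≠ 0 := by
        intro h
        rw [h] at hfw
        have : w 1 = w 0 := f.injective (by rw [← hfw, hf0])
        have := winj _ _ (by omega) (by omega) this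
        omega
      have h1 : PathP w 1 (n-1) s(w j, w (j-1)) := by
        apply hsym
        have := pathIntro w (lo := 1) (hi := n-1) (i := j-1) (by omega) (by omega)
        have e : j - 1 + 1 = j := by omega
        rwa [e] at this
      have h2 : PathP w 1 (n-1) s(w j, w (j+1)) :=
        pathIntro w (by omega) (by omega)
      rw [hfw] at h1 h2
      have := pull_unique f f.surjective hfP uniq1 h1 h2
      have := winj _ _ (by omega) (by omega) this
      omega
    have hchase : ∀ (y : ℕ → V), f (w 1) = y 0 → f (w 2) = y 1 →
        (∀ t, 1 ≤ t → t < n-2 → ∀ z, PathP w 1 (n-1) s(y t, z) → z = y (t-1) ∨ z = y (t+1)) →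
        ∀ t, t ≤ n-2 → f (w (t+1)) = y t := by
      intro y h0 h1 hy
      apply chase f f.injective (fun a b => PathP w 1 (n-1) s(a,b))
        (fun a b h => (hfP a b).1 h) (fun t => w (t+1)) y (n-2) (by simpa using h0)
        (by simpa using h1)
      · intro t ht
        exact pathIntro w (by omega) (by omega)
      · exact hy
      · intro t ht1 ht2 he
        have := winj _ _ (by omega) (by omega) he
        omega
    rcases hf1 with hA | hB
    · have h2 : f (w 2) = w 2 := by
        have hr : PathP w 1 (n-1) s(w 1, w 2) := by
          simpa using pathIntro w (lo := 1) (hi := n-1) (i := 1) (by omega) (by omega)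
        have := (hfP _ _).1 hr
        rw [hA] at this
        exact uniq1 _ this
      have hy1 : ∀ t, 1 ≤ t → t < n-2 → ∀ z, PathP w 1 (n-1) s(w (t+1), z) →
          z = w (t-1+1) ∨ z = w (t+1+1) := by
        intro t ht1 ht2 z hz
        rcases hElim (t+1) z (by omega) hz with ⟨-, -, h3⟩ | ⟨-, -, h3⟩
        · refine Or.inl ?_
          have e : t + 1 - 1 = t - 1 + 1 := by omega
          rwa [e] at h3
        · exact Or.inr h3
      have hfix := hchase (fun t => w (t+1)) (by simpa using hA) h2 hy1
      intro x
      obtain ⟨j, hj, rfl⟩ := wsurj x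
      rcases Nat.eq_zero_or_pos j with rfl | hjpos
      · exact hf0
      · have := hfix (j-1) (by omega)
        have e : j - 1 + 1 = j := by omega
        rwa [e] at this
    · have h2 : f (w 2) = w (n-2) := by
        have hr : PathP w 1 (n-1) s(w 1, w 2) := by
          simpa using pathIntro w (lo := 1) (hi := n-1) (i := 1) (by omega) (by omega)
        have := (hfP _ _).1 hr
        rw [hB] at this
        exact uniqN _ this
      have hy1 : ∀ t, 1 ≤ t → t < n-2 → ∀ z, PathP w 1 (n-1) s(w (n-1-t), z) →
          z = w (n-1-(t-1)) ∨ z = w (n-1-(t+1)) := by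
        intro t ht1 ht2 z hz
        rcases hElim (n-1-t) z (by omega) hz with ⟨-, -, h3⟩ | ⟨-, -, h3⟩
        · refine Or.inr ?_
          have e : n - 1 - t - 1 = n - 1 - (t+1) := by omega
          rwa [e] at h3
        · refine Or.inl ?_
          have e : n - 1 - t + 1 = n - 1 - (t-1) := by omega
          rwa [e] at h3
      have hfix := hchase (fun t => w (n-1-t)) (by simpa using hB)
        (by show f (w (1+1)) = w (n-1-1); rw [(by omega : n-1-1 = n-2), (by norm_num : 1+1 = 2)]; exact h2) hy1
      have hfval : ∀ i, i < n → f (w i) = w (if i = 0 then 0 else n - i) := by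
        intro i hi
        rcases Nat.eq_zero_or_pos i with rfl | hipos
        · simpa using hf0
        · have := hfix (i-1) (by omega)
          have e1 : i - 1 + 1 = i := by omega
          rw [e1] at this
          rw [this, if_neg (by omega)]
          congr 1
          omega
      have key : ∀ i j, i < n → j < n →
          (G.Adj (w i) (w j) ↔ G.Adj (w (if i = 0 then 0 else n - i)) (w (if j = 0 then 0 else n - j))) := by
        intro i j hi hj
        rw [← hfval i hi, ← hfval j hj]
        exact hfadj (w i) (w j)
      exact (hσ key).elim

lemma case3a (hn : 7 ≤ n)
    (winj : ∀ i j, i < n → j < n → w i = w j → i = j)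
    (wsurj : ∀ a : V, ∃ i, i < n ∧ w i = a)
    (hadj : ∀ i, i + 2 ≤ n → G.Adj (w i) (w (i+1)))
    {k : ℕ} (hk2 : 2 ≤ k) (hk4 : k + 4 ≤ n) (hkm : 2*k ≠ n - 2)
    (hchord : G.Adj (w k) (w (n-1))) :
    GoodP G := by
  set P : Sym2 V → Prop := fun e => PathP w 0 (n-2) e ∨ e = s(w k, w (n-1)) with hPdef
  refine ⟨P, ?_, ?_⟩
  · rintro a b (⟨i, -, h2, heq⟩ | heq)
    · rcases Sym2.eq_iff.1 heq with ⟨rfl, rfl⟩ | ⟨rfl, rfl⟩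
      · exact hadj i (by omega)
      · exact (hadj i (by omega)).symm
    · rcases Sym2.eq_iff.1 heq with ⟨rfl, rfl⟩ | ⟨rfl, rfl⟩
      · exact hchord
      · exact hchord.symm
  · intro f hfadj hfP
    have hpE := pathElim winj (lo := 0) (hi := n-2) (by omega)
    have hElim : ∀ j z, j < n → P s(w j, z) →
        (1 ≤ j ∧ j ≤ n-2 ∧ z = w (j-1)) ∨ (j + 1 ≤ n-2 ∧ z = w (j+1)) ∨
        (j = k ∧ z = w (n-1)) ∨ (j = n-1 ∧ z = w k) := by
      intro j z hj h
      rcases h with h | h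
      · rcases hpE j z hj h with ⟨h1, h2, h3⟩ | ⟨-, h2, h3⟩
        · exact Or.inl ⟨by omega, h2, h3⟩
        · exact Or.inr (Or.inl ⟨h2, h3⟩)
      · rcases Sym2.eq_iff.1 h with ⟨ha, hb⟩ | ⟨ha, hb⟩
        · exact Or.inr (Or.inr (Or.inl ⟨winj _ _ hj (by omega) ha, hb⟩))
        · exact Or.inr (Or.inr (Or.inr ⟨winj _ _ hj (by omega) ha, hb⟩))
    have hsym : ∀ a b, P s(a,b) → P s(b,a) := by
      intro a b h; rwa [Sym2.eq_swap]
    have hPI : ∀ i, i + 1 ≤ n-2 → P s(w i, w (i+1)) :=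
      fun i h => Or.inl (pathIntro w (by omega) h)
    have hCh : P s(w k, w (n-1)) := Or.inr rfl
    -- f fixes w k
    have hfk : f (w k) = w k := by
      obtain ⟨j, hj, hfw⟩ := wsurj (f (w k))
      by_contra hcon
      have hjk : j ≠ k := fun h => hcon (by rw [← hfw, h])
      have hA : P s(f (w k), f (w (k-1))) := by
        apply (hfP _ _).1
        apply hsym
        have := hPI (k-1) (by omega)
        have e : k - 1 + 1 = k := by omega
        rwa [e] at this
      have hB : P s(f (w k), f (w (k+1))) := (hfP _ _).1 (hPI k (by omega))
      have hC : P s(f (w k), f (w (n-1))) := (hfP _ _).1 hCh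
      rw [← hfw] at hA hB hC
      have hab : f (w (k-1)) = f (w (k+1)) → False := by
        intro h
        have := winj _ _ (by omega) (by omega) (f.injective h)
        omega
      have hac : f (w (k-1)) = f (w (n-1)) → False := by
        intro h
        have := winj _ _ (by omega) (by omega) (f.injective h)
        omega
      have hbc : f (w (k+1)) = f (w (n-1)) → False := by
        intro h
        have := winj _ _ (by omega) (by omega) (f.injective h)
        omega
      by_cases hjn : j = n-1
      · subst hjn
        rcases hElim (n-1) _ (by omega) hA with ⟨-, h2, -⟩ | ⟨h2, -⟩ | ⟨h2, -⟩ | ⟨-, ha⟩ <;>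
          try omega
        rcases hElim (n-1) _ (by omega) hB with ⟨-, h2, -⟩ | ⟨h2, -⟩ | ⟨h2, -⟩ | ⟨-, hb⟩ <;>
          try omega
        exact hab (ha.trans hb.symm)
      · rcases hElim j _ hj hA with ⟨-, -, ha⟩ | ⟨-, ha⟩ | ⟨he, -⟩ | ⟨he, -⟩ <;>
          try (first | exact hjk he | exact hjn he)
        all_goals rcases hElim j _ hj hB with ⟨-, -, hb⟩ | ⟨-, hb⟩ | ⟨he2, -⟩ | ⟨he2, -⟩ <;>
          try (first | exact hjk he2 | exact hjn he2)
        all_goals rcases hElim j _ hj hC with ⟨-, -, hc⟩ | ⟨-, hc⟩ | ⟨he3, -⟩ | ⟨he3, -⟩ <;>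
          try (first | exact hjk he3 | exact hjn he3)
        all_goals first
          | exact hab (ha.trans hb.symm)
          | exact hac (ha.trans hc.symm)
          | exact hbc (hb.trans hc.symm)
    have uniqN : ∀ z, P s(w (n-1), z) → z = w k := by
      intro z h
      rcases hElim (n-1) z (by omega) h with ⟨-, h2, -⟩ | ⟨h2, -⟩ | ⟨h2, -⟩ | ⟨-, h3⟩ <;>
        try omega
    have hfN : f (w (n-1)) = w (n-1) := by
      have hC : P s(w k, f (w (n-1))) := by
        have := (hfP _ _).1 hCh; rwa [hfk] at this
      rcases hElim k _ (by omega) hC with ⟨-, -, hc⟩ | ⟨-, hc⟩ | ⟨-, hc⟩ | ⟨he, -⟩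
      · exfalso
        have h1 : P s(w (k-1), w (k-2)) := by
          apply hsym
          have := hPI (k-2) (by omega)
          have e : k-2+1 = k-1 := by omega
          rwa [e] at this
        have h2 : P s(w (k-1), w k) := by
          have := hPI (k-1) (by omega)
          have e : k-1+1 = k := by omega
          rwa [e] at this
        rw [← hc] at h1 h2
        have := pull_unique f f.surjective hfP uniqN h1 h2
        have := winj _ _ (by omega) (by omega) this
        omega
      · exfalso
        have h1 : P s(w (k+1), w k) := hsym _ _ (hPI k (by omega))
        have h2 : P s(w (k+1), w (k+2)) := hPI (k+1) (by omega)
        rw [← hc] at h1 h2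
        have := pull_unique f f.surjective hfP uniqN h1 h2
        have := winj _ _ (by omega) (by omega) this
        omega
      · exact hc
      · omega
    have hfk1 : f (w (k+1)) = w (k+1) ∨ f (w (k+1)) = w (k-1) := by
      have hB : P s(w k, f (w (k+1))) := by
        have := (hfP _ _).1 (hPI k (by omega)); rwa [hfk] at this
      rcases hElim k _ (by omega) hB with ⟨-, -, hc⟩ | ⟨-, hc⟩ | ⟨-, hc⟩ | ⟨he, -⟩
      · exact Or.inr hc
      · exact Or.inl hc
      · exfalso
        have := f.injective (hc.trans hfN.symm)
        have := winj _ _ (by omega) (by omega) this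
        omega
      · omega
    have hyDn : ∀ (T : ℕ), T ≤ k → ∀ t, 1 ≤ t → t < T → ∀ z, P s(w (k-t), z) →
        z = w (k-(t-1)) ∨ z = w (k-(t+1)) := by
      intro T hT t ht1 ht2 z hz
      rcases hElim (k-t) z (by omega) hz with ⟨-, -, hc⟩ | ⟨-, hc⟩ | ⟨he, -⟩ | ⟨he, -⟩
      · refine Or.inr ?_
        have e : k - t - 1 = k - (t+1) := by omega
        rwa [e] at hc
      · refine Or.inl ?_
        have e : k - t + 1 = k - (t-1) := by omega
        rwa [e] at hc
      · omega
      · omega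
    have hxDn : ∀ (T : ℕ), T ≤ k → ∀ t, t < T → P s(w (k-t), w (k-(t+1))) := by
      intro T hT t ht
      apply hsym
      have := hPI (k-(t+1)) (by omega)
      have e : k - (t+1) + 1 = k - t := by omega
      rwa [e] at this
    rcases hfk1 with hA | hB
    · have hup : ∀ t, t ≤ n-2-k → f (w (k+t)) = w (k+t) := by
        apply chase f f.injective (fun a b => P s(a,b)) (fun a b h => (hfP a b).1 h)
          (fun t => w (k+t)) (fun t => w (k+t)) (n-2-k) hfk hA
        · intro t ht
          exact hPI (k+t) (by omega)
        · intro t ht1 ht2 z hz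
          rcases hElim (k+t) z (by omega) hz with ⟨-, -, hc⟩ | ⟨-, hc⟩ | ⟨he, -⟩ | ⟨he, -⟩
          · refine Or.inl ?_
            have e : k + t - 1 = k + (t-1) := by omega
            rwa [e] at hc
          · exact Or.inr hc
          · omega
          · omega
        · intro t ht1 ht2 he
          have := winj _ _ (by omega) (by omega) he
          omega
      have hfkm1 : f (w (k-1)) = w (k-1) := by
        have hB' : P s(w k, f (w (k-1))) := by
          have h0 : P s(w k, w (k-1)) := by
            have := hxDn k le_rfl 0 (by omega)
            simpa using this
          have := (hfP _ _).1 h0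
          rwa [hfk] at this
        rcases hElim k _ (by omega) hB' with ⟨-, -, hc⟩ | ⟨-, hc⟩ | ⟨-, hc⟩ | ⟨he, -⟩
        · exact hc
        · exfalso
          have := f.injective (hc.trans hA.symm)
          have := winj _ _ (by omega) (by omega) this
          omega
        · exfalso
          have := f.injective (hc.trans hfN.symm)
          have := winj _ _ (by omega) (by omega) this
          omega
        · omega
      have hdn : ∀ t, t ≤ k → f (w (k-t)) = w (k-t) := by
        apply chase f f.injective (fun a b => P s(a,b)) (fun a b h => (hfP a b).1 h)
          (fun t => w (k-t)) (fun t => w (k-t)) k hfk (by simpa using hfkm1)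
        · exact hxDn k le_rfl
        · intro t ht1 ht2 z hz
          exact hyDn k le_rfl t ht1 ht2 z hz
        · intro t ht1 ht2 he
          have := winj _ _ (by omega) (by omega) he
          omega
      intro x
      obtain ⟨j, hj, rfl⟩ := wsurj x
      rcases Nat.lt_or_ge j k with h | h
      · have := hdn (k-j) (by omega)
        have e : k - (k-j) = j := by omega
        rwa [e] at this
      · rcases Nat.lt_or_ge j (n-1) with h2 | h2
        · have := hup (j-k) (by omega)
          have e : k + (j-k) = j := by omega
          rwa [e] at this
        · have e : j = n-1 := by omega
          rw [e]
          exact hfN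
    · exfalso
      rcases lt_trichotomy k (n-2-k) with hlt | heq | hgt
      · have hdn1 : ∀ t, t ≤ k → f (w (k+t)) = w (k-t) := by
          apply chase f f.injective (fun a b => P s(a,b)) (fun a b h => (hfP a b).1 h)
            (fun t => w (k+t)) (fun t => w (k-t)) k hfk (by simpa using hB)
          · intro t ht
            exact hPI (k+t) (by omega)
          · exact hyDn k le_rfl
          · intro t ht1 ht2 he
            have := winj _ _ (by omega) (by omega) he
            omega
        have hend := hdn1 k le_rfl
        rw [show k - k = 0 from by omega] at hend
        have ha : P s(w (k+k), w (k+k-1)) := by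
          apply hsym
          have := hPI (k+k-1) (by omega)
          have e : k + k - 1 + 1 = k + k := by omega
          rwa [e] at this
        have hb : P s(w (k+k), w (k+k+1)) := hPI (k+k) (by omega)
        have ha' := (hfP _ _).1 ha
        have hb' := (hfP _ _).1 hb
        rw [hend] at ha' hb'
        have e1 : f (w (k+k-1)) = w 1 := by
          rcases hElim 0 _ (by omega) ha' with ⟨hc, -, -⟩ | ⟨-, hc⟩ | ⟨he, -⟩ | ⟨he, -⟩ <;>
            first | omega | exact hc
        have e2 : f (w (k+k+1)) = w 1 := by
          rcases hElim 0 _ (by omega) hb' with ⟨hc, -, -⟩ | ⟨-, hc⟩ | ⟨he, -⟩ | ⟨he, -⟩ <;>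
            first | omega | exact hc
        have := f.injective (e1.trans e2.symm)
        have := winj _ _ (by omega) (by omega) this
        omega
      · omega
      · have hdn1 : ∀ t, t ≤ n-2-k → f (w (k+t)) = w (k-t) := by
          apply chase f f.injective (fun a b => P s(a,b)) (fun a b h => (hfP a b).1 h)
            (fun t => w (k+t)) (fun t => w (k-t)) (n-2-k) hfk (by simpa using hB)
          · intro t ht
            exact hPI (k+t) (by omega)
          · exact hyDn (n-2-k) (by omega)
          · intro t ht1 ht2 he
            have := winj _ _ (by omega) (by omega) he
            omega
        have hend := hdn1 (n-2-k) le_rfl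
        rw [show k + (n-2-k) = n-2 from by omega] at hend
        have uniqN2 : ∀ z, P s(w (n-2), z) → z = w (n-3) := by
          intro z h
          rcases hElim (n-2) z (by omega) h with ⟨-, -, hc⟩ | ⟨hc, -⟩ | ⟨he, -⟩ | ⟨he, -⟩ <;>
            try omega
        have h1 : P s(w (k-(n-2-k)), w (k-(n-2-k)-1)) := by
          apply hsym
          have := hPI (k-(n-2-k)-1) (by omega)
          have e : k - (n-2-k) - 1 + 1 = k - (n-2-k) := by omega
          rwa [e] at this
        have h2 : P s(w (k-(n-2-k)), w (k-(n-2-k)+1)) := hPI (k-(n-2-k)) (by omega)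
        rw [← hend] at h1 h2
        have := pull_unique f f.surjective hfP uniqN2 h1 h2
        have := winj _ _ (by omega) (by omega) this
        omega

lemma case3bi (hn : 7 ≤ n)
    (winj : ∀ i j, i < n → j < n → w i = w j → i = j)
    (wsurj : ∀ a : V, ∃ i, i < n ∧ w i = a)
    (hadj : ∀ i, i + 2 ≤ n → G.Adj (w i) (w (i+1)))
    (h02 : G.Adj (w 0) (w 2)) (h13 : G.Adj (w 1) (w 3))
    (hne3 : ¬ G.Adj (w (n-1)) (w (n-4))) :
    GoodP G := by
  set P : Sym2 V → Prop :=
    fun e => PathP w 2 (n-1) e ∨ e = s(w 1, w 0) ∨ e = s(w 0, w 2) with hPdef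
  refine ⟨P, ?_, ?_⟩
  · rintro a b (⟨i, -, h2, heq⟩ | heq | heq)
    · rcases Sym2.eq_iff.1 heq with ⟨rfl, rfl⟩ | ⟨rfl, rfl⟩
      · exact hadj i (by omega)
      · exact (hadj i (by omega)).symm
    · rcases Sym2.eq_iff.1 heq with ⟨rfl, rfl⟩ | ⟨rfl, rfl⟩
      · exact (hadj 0 (by omega)).symm
      · exact hadj 0 (by omega)
    · rcases Sym2.eq_iff.1 heq with ⟨rfl, rfl⟩ | ⟨rfl, rfl⟩
      · exact h02
      · exact h02.symm
  · intro f hfadj hfP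
    have hpE := pathElim winj (lo := 2) (hi := n-1) (by omega)
    have hElim : ∀ j z, j < n → P s(w j, z) →
        (3 ≤ j ∧ j ≤ n-1 ∧ z = w (j-1)) ∨ (2 ≤ j ∧ j+1 ≤ n-1 ∧ z = w (j+1)) ∨
        (j = 1 ∧ z = w 0) ∨ (j = 0 ∧ z = w 1) ∨ (j = 0 ∧ z = w 2) ∨ (j = 2 ∧ z = w 0) := by
      intro j z hj h
      rcases h with h | h | h
      · rcases hpE j z hj h with ⟨h1, h2, h3⟩ | ⟨h1, h2, h3⟩
        · exact Or.inl ⟨by omega, h2, h3⟩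
        · exact Or.inr (Or.inl ⟨h1, h2, h3⟩)
      · rcases Sym2.eq_iff.1 h with ⟨ha, hb⟩ | ⟨ha, hb⟩
        · exact Or.inr (Or.inr (Or.inl ⟨winj _ _ hj (by omega) ha, hb⟩))
        · exact Or.inr (Or.inr (Or.inr (Or.inl ⟨winj _ _ hj (by omega) ha, hb⟩)))
      · rcases Sym2.eq_iff.1 h with ⟨ha, hb⟩ | ⟨ha, hb⟩
        · exact Or.inr (Or.inr (Or.inr (Or.inr (Or.inl ⟨winj _ _ hj (by omega) ha, hb⟩))))
        · exact Or.inr (Or.inr (Or.inr (Or.inr (Or.inr ⟨winj _ _ hj (by omega) ha, hb⟩))))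
    have hsym : ∀ a b, P s(a,b) → P s(b,a) := by
      intro a b h; rwa [Sym2.eq_swap]
    have hPI : ∀ i, 2 ≤ i → i + 1 ≤ n-1 → P s(w i, w (i+1)) :=
      fun i h1 h2 => Or.inl (pathIntro w h1 h2)
    have h10 : P s(w 1, w 0) := Or.inr (Or.inl rfl)
    have h02P : P s(w 0, w 2) := Or.inr (Or.inr rfl)
    have uniq1 : ∀ z, P s(w 1, z) → z = w 0 := by
      intro z h
      rcases hElim 1 z (by omega) h with ⟨h1,-,-⟩|⟨h1,-,-⟩|⟨-,h3⟩|⟨h1,-⟩|⟨h1,-⟩|⟨h1,-⟩ <;>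
        first | omega | exact h3
    have uniqN : ∀ z, P s(w (n-1), z) → z = w (n-2) := by
      intro z h
      rcases hElim (n-1) z (by omega) h with ⟨-,-,h3⟩|⟨-,h1,-⟩|⟨h1,-⟩|⟨h1,-⟩|⟨h1,-⟩|⟨h1,-⟩ <;>
        try omega
    have nbrs0 : ∀ z, P s(w 0, z) → z = w 1 ∨ z = w 2 := by
      intro z h
      rcases hElim 0 z (by omega) h with ⟨h1,-,-⟩|⟨h1,-,-⟩|⟨h1,-⟩|⟨-,h3⟩|⟨-,h3⟩|⟨h1,-⟩ <;>
        first | omega | exact Or.inl h3 | exact Or.inr h3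
    have nbrs2 : ∀ z, P s(w 2, z) → z = w 3 ∨ z = w 0 := by
      intro z h
      rcases hElim 2 z (by omega) h with ⟨h1,-,-⟩|⟨-,-,h3⟩|⟨h1,-⟩|⟨h1,-⟩|⟨h1,-⟩|⟨-,h3⟩ <;>
        first | omega | exact Or.inl (by simpa using h3) | exact Or.inr h3
    have hf1 : f (w 1) = w 1 ∨ f (w 1) = w (n-1) := by
      obtain ⟨j, hj, hfw⟩ := wsurj (f (w 1))
      by_contra hcon
      push_neg at hcon
      have hj1 : j ≠ 1 := fun h => hcon.1 (by rw [← hfw, h])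
      have hjN : j ≠ n-1 := fun h => hcon.2 (by rw [← hfw, h])
      rcases Nat.eq_zero_or_pos j with rfl | hjpos
      · have h1 : P s(w 0, w 1) := hsym _ _ h10
        rw [hfw] at h1
        have h2 : P s(w 0, w 2) := h02P
        rw [hfw] at h2
        have := pull_unique f f.surjective hfP uniq1 h1 h2
        have := winj _ _ (by omega) (by omega) this
        omega
      · rcases Nat.lt_or_ge j 3 with h3 | h3
        · have hj2 : j = 2 := by omega
          subst hj2
          have h1 : P s(w 2, w 3) := by simpa using hPI 2 (by omega) (by omega)
          have h2 : P s(w 2, w 0) := hsym _ _ h02P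
          rw [hfw] at h1 h2
          have := pull_unique f f.surjective hfP uniq1 h1 h2
          have := winj _ _ (by omega) (by omega) this
          omega
        · have h1 : P s(w j, w (j-1)) := by
            apply hsym
            have := hPI (j-1) (by omega) (by omega)
            have e : j - 1 + 1 = j := by omega
            rwa [e] at this
          have h2 : P s(w j, w (j+1)) := hPI j (by omega) (by omega)
          rw [hfw] at h1 h2
          have := pull_unique f f.surjective hfP uniq1 h1 h2
          have := winj _ _ (by omega) (by omega) this
          omega
    rcases hf1 with hA | hB
    · have hf0 : f (w 0) = w 0 := by
        have := (hfP _ _).1 h10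
        rw [hA] at this
        exact uniq1 _ this
      have hf2 : f (w 2) = w 2 := by
        have := (hfP _ _).1 h02P
        rw [hf0] at this
        rcases nbrs0 _ this with h | h
        · exfalso
          have := f.injective (h.trans hA.symm)
          have := winj _ _ (by omega) (by omega) this
          omega
        · exact h
      have hf3 : f (w 3) = w 3 := by
        have := (hfP _ _).1 (hPI 2 (by omega) (by omega))
        rw [hf2] at this
        rcases nbrs2 _ (by simpa using this) with h | h
        · exact h
        · exfalso
          have := f.injective (h.trans hf0.symm)
          have := winj _ _ (by omega) (by omega) this
          omega
      have hup : ∀ t, t ≤ n-3 → f (w (t+2)) = w (t+2) := by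
        apply chase f f.injective (fun a b => P s(a,b)) (fun a b h => (hfP a b).1 h)
          (fun t => w (t+2)) (fun t => w (t+2)) (n-3) (by simpa using hf2)
          (by simpa using hf3)
        · intro t ht
          have := hPI (t+2) (by omega) (by omega)
          have e : t + 2 + 1 = t + 1 + 2 := by omega
          rwa [e] at this
        · intro t ht1 ht2 z hz
          rcases hElim (t+2) z (by omega) hz with ⟨-,-,h3⟩|⟨-,-,h3⟩|⟨h1,-⟩|⟨h1,-⟩|⟨h1,-⟩|⟨h1,-⟩ <;>
            try omega
          · refine Or.inl ?_
            have e : t + 2 - 1 = t - 1 + 2 := by omega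
            rwa [e] at h3
          · refine Or.inr ?_
            have e : t + 2 + 1 = t + 1 + 2 := by omega
            rwa [e] at h3
        · intro t ht1 ht2 he
          have := winj _ _ (by omega) (by omega) he
          omega
      intro x
      obtain ⟨j, hj, rfl⟩ := wsurj x
      rcases Nat.lt_or_ge j 2 with h | h
      · interval_cases j
        · exact hf0
        · exact hA
      · have := hup (j-2) (by omega)
        have e : j - 2 + 2 = j := by omega
        rwa [e] at this
    · exfalso
      have hf0' : f (w 0) = w (n-2) := by
        have := (hfP _ _).1 h10
        rw [hB] at this
        exact uniqN _ this
      have hf2' : f (w 2) = w (n-3) := by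
        have := (hfP _ _).1 h02P
        rw [hf0'] at this
        rcases hElim (n-2) _ (by omega) this with ⟨-,-,h3⟩|⟨-,-,h3⟩|⟨h1,-⟩|⟨h1,-⟩|⟨h1,-⟩|⟨h1,-⟩ <;>
          try omega
        · exfalso
          have e : n - 2 + 1 = n - 1 := by omega
          rw [e] at h3
          have := f.injective (h3.trans hB.symm)
          have := winj _ _ (by omega) (by omega) this
          omega
      have hf3' : f (w 3) = w (n-4) := by
        have := (hfP _ _).1 (hPI 2 (by omega) (by omega))
        rw [hf2'] at this
        have this2 : P s(w (n-3), f (w 3)) := by simpa using this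
        rcases hElim (n-3) _ (by omega) this2 with ⟨-,-,h3⟩|⟨-,-,h3⟩|⟨h1,-⟩|⟨h1,-⟩|⟨h1,-⟩|⟨h1,-⟩ <;>
          try omega
        · exfalso
          have e : n - 3 + 1 = n - 2 := by omega
          rw [e] at h3
          have := f.injective (h3.trans hf0'.symm)
          have := winj _ _ (by omega) (by omega) this
          omega
      have := (hfadj _ _).1 h13
      rw [hB, hf3'] at this
      exact hne3 this

lemma case3bii (hn : 7 ≤ n)
    (winj : ∀ i j, i < n → j < n → w i = w j → i = j)
    (wsurj : ∀ a : V, ∃ i, i < n ∧ w i = a)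
    (wadd : ∀ i, w (i + n) = w i)
    (hcyc : ∀ j, G.Adj (w j) (w (j+1)))
    (D : Prop) (m : ℕ)
    (hDm : D → 2*m = n)
    (hdiam : D → ∀ j, G.Adj (w j) (w (j+m)))
    (hnbr : ∀ j z, G.Adj (w j) z → z = w (j+1) ∨ z = w (j+(n-1)) ∨ (D ∧ z = w (j+m))) :
    GoodP G := by
  have hm4 : D → 4 ≤ m := fun hD => by have := hDm hD; omega
  have wmod : ∀ i, w i = w (i % n) := by
    intro i
    induction i using Nat.strong_induction_on with
    | _ i ih =>
      rcases Nat.lt_or_ge i n with h | h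
      · rw [Nat.mod_eq_of_lt h]
      · calc w i = w (i - n + n) := by rw [(by omega : i - n + n = i)]
          _ = w (i - n) := wadd _
          _ = w ((i - n) % n) := ih _ (by omega)
          _ = w (i % n) := by rw [← Nat.mod_eq_sub_mod h]
  have wne : ∀ a d, 1 ≤ d → d ≤ n-1 → w a ≠ w (a+d) := by
    intro a d hd1 hd2 hww
    rw [wmod a, wmod (a+d)] at hww
    have h1 := winj _ _ (Nat.mod_lt _ (by omega)) (Nat.mod_lt _ (by omega)) hww
    rw [Nat.add_mod a d n, Nat.mod_eq_of_lt (show d < n by omega)] at h1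
    set r := a % n with hr
    have hrlt : r < n := Nat.mod_lt _ (by omega)
    rcases Nat.lt_or_ge (r + d) n with h | h
    · rw [Nat.mod_eq_of_lt h] at h1; omega
    · rw [Nat.mod_eq_sub_mod h, Nat.mod_eq_of_lt (by omega)] at h1; omega
  set P : Sym2 V → Prop :=
    fun e => e = s(w 0, w 1) ∨ e = s(w 2, w 3) ∨ e = s(w 3, w 4) with hPdef
  have a01 : G.Adj (w 0) (w 1) := by simpa using hcyc 0
  have a23 : G.Adj (w 2) (w 3) := by simpa using hcyc 2
  have a34 : G.Adj (w 3) (w 4) := by simpa using hcyc 3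
  refine ⟨P, ?_, ?_⟩
  · rintro a b (heq | heq | heq) <;>
      rcases Sym2.eq_iff.1 heq with ⟨rfl, rfl⟩ | ⟨rfl, rfl⟩
    · exact a01
    · exact a01.symm
    · exact a23
    · exact a23.symm
    · exact a34
    · exact a34.symm
  · intro f hfadj hfP
    have hElim : ∀ j z, j < n → P s(w j, z) →
        (j = 0 ∧ z = w 1) ∨ (j = 1 ∧ z = w 0) ∨ (j = 2 ∧ z = w 3) ∨
        (j = 3 ∧ z = w 2) ∨ (j = 3 ∧ z = w 4) ∨ (j = 4 ∧ z = w 3) := by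
      intro j z hj h
      rcases h with h | h | h <;> rcases Sym2.eq_iff.1 h with ⟨ha, hb⟩ | ⟨ha, hb⟩
      · exact Or.inl ⟨winj _ _ hj (by omega) ha, hb⟩
      · exact Or.inr (Or.inl ⟨winj _ _ hj (by omega) ha, hb⟩)
      · exact Or.inr (Or.inr (Or.inl ⟨winj _ _ hj (by omega) ha, hb⟩))
      · exact Or.inr (Or.inr (Or.inr (Or.inl ⟨winj _ _ hj (by omega) ha, hb⟩)))
      · exact Or.inr (Or.inr (Or.inr (Or.inr (Or.inl ⟨winj _ _ hj (by omega) ha, hb⟩))))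
      · exact Or.inr (Or.inr (Or.inr (Or.inr (Or.inr ⟨winj _ _ hj (by omega) ha, hb⟩))))
    have hsym : ∀ a b, P s(a,b) → P s(b,a) := by
      intro a b h; rwa [Sym2.eq_swap]
    have h01 : P s(w 0, w 1) := Or.inl rfl
    have h23 : P s(w 2, w 3) := Or.inr (Or.inl rfl)
    have h34 : P s(w 3, w 4) := Or.inr (Or.inr rfl)
    -- f fixes w 3
    have hf3 : f (w 3) = w 3 := by
      obtain ⟨j, hj, hfw⟩ := wsurj (f (w 3))
      have hA : P s(w j, f (w 2)) := by
        have := (hfP _ _).1 (hsym _ _ h23); rwa [← hfw] at this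
      have hB : P s(w j, f (w 4)) := by
        have := (hfP _ _).1 h34; rwa [← hfw] at this
      by_cases hj3 : j = 3
      · rw [← hfw, hj3]
      · exfalso
        rcases hElim j _ hj hA with ⟨e1,z1⟩|⟨e1,z1⟩|⟨e1,z1⟩|⟨e1,z1⟩|⟨e1,z1⟩|⟨e1,z1⟩ <;>
          rcases hElim j _ hj hB with ⟨e2,z2⟩|⟨e2,z2⟩|⟨e2,z2⟩|⟨e2,z2⟩|⟨e2,z2⟩|⟨e2,z2⟩ <;>
          first
          | omega
          | (have := f.injective (z1.trans z2.symm)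
             have := winj _ _ (by omega) (by omega) this
             omega)
    -- f maps {w2, w4} to itself
    have hf24 : f (w 2) = w 2 ∨ f (w 2) = w 4 := by
      have := (hfP _ _).1 h23
      rw [hf3] at this
      have := hsym _ _ this
      rcases hElim 3 _ (by omega) this with ⟨e1,z1⟩|⟨e1,z1⟩|⟨e1,z1⟩|⟨e1,z1⟩|⟨e1,z1⟩|⟨e1,z1⟩ <;>
        first | omega | exact Or.inl z1 | exact Or.inr z1
    have hf42 : f (w 4) = w 2 ∨ f (w 4) = w 4 := by
      have := (hfP _ _).1 h34
      rw [hf3] at this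
      rcases hElim 3 _ (by omega) this with ⟨e1,z1⟩|⟨e1,z1⟩|⟨e1,z1⟩|⟨e1,z1⟩|⟨e1,z1⟩|⟨e1,z1⟩ <;>
        first | omega | exact Or.inl z1 | exact Or.inr z1
    -- f w1 ∈ {w0, w1}
    have hf1w : f (w 1) = w 1 ∨ (f (w 1) = w 0 ∧ f (w 0) = w 1) := by
      obtain ⟨j, hj, hfw⟩ := wsurj (f (w 1))
      have hA : P s(w j, f (w 0)) := by
        have := (hfP _ _).1 (hsym _ _ h01); rwa [← hfw] at this
      rcases hElim j _ hj hA with ⟨e1,z1⟩|⟨e1,z1⟩|⟨e1,z1⟩|⟨e1,z1⟩|⟨e1,z1⟩|⟨e1,z1⟩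
      · exact Or.inr ⟨by rw [← hfw, e1], z1⟩
      · exact Or.inl (by rw [← hfw, e1])
      · exfalso
        have := f.injective (z1.trans hf3.symm)
        have := winj _ _ (by omega) (by omega) this
        omega
      · exfalso
        subst e1
        have := f.injective (hfw.symm.trans hf3.symm)
        have := winj _ _ (by omega) (by omega) this
        omega
      · exfalso
        subst e1
        have := f.injective (hfw.symm.trans hf3.symm)
        have := winj _ _ (by omega) (by omega) this
        omega
      · exfalso
        have := f.injective (z1.trans hf3.symm)
        have := winj _ _ (by omega) (by omega) this
        omega
    have a12 : G.Adj (w 1) (w 2) := by simpa using hcyc 1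
    have hf1 : f (w 1) = w 1 := by
      rcases hf1w with h | ⟨h10', h01'⟩
      · exact h
      exfalso
      have hA : G.Adj (w 0) (f (w 2)) := by
        have := (hfadj _ _).1 a12
        rwa [h10'] at this
      rcases hf24 with h2 | h2
      · rw [h2] at hA
        rcases hnbr 0 _ hA with hz | hz | ⟨hD, hz⟩
        · rw [(by norm_num : 0+1 = 1)] at hz
          have := winj _ _ (by omega) (by omega) hz; omega
        · rw [(by omega : 0+(n-1) = n-1)] at hz
          have := winj _ _ (by omega) (by omega) hz; omega
        · have h2m := hDm hD; have h4m := hm4 hD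
          rw [(by omega : 0+m = m)] at hz
          have := winj _ _ (by omega) (by omega) hz; omega
      · have hf4' : f (w 4) = w 2 := by
          rcases hf42 with h4 | h4
          · exact h4
          · exfalso
            have := f.injective (h2.trans h4.symm)
            have := winj _ _ (by omega) (by omega) this; omega
        rw [h2] at hA
        rcases hnbr 0 _ hA with hz | hz | ⟨hD, hz⟩
        · rw [(by norm_num : 0+1 = 1)] at hz
          have := winj _ _ (by omega) (by omega) hz; omega
        · rw [(by omega : 0+(n-1) = n-1)] at hz
          have := winj _ _ (by omega) (by omega) hz; omega
        · have h2m := hDm hD; have h4m := hm4 hD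
          rw [(by omega : 0+m = m)] at hz
          have hm' : m = 4 := by
            have := winj _ _ (by omega) (by omega) hz; omega
          have hn8 : n = 8 := by omega
          have hf7 : f (w 7) = w 7 := by
            have hA7 : G.Adj (w 3) (f (w 7)) := by
              have hd3 := hdiam hD 3
              rw [(by omega : 3 + m = 7)] at hd3
              have := (hfadj _ _).1 hd3
              rwa [hf3] at this
            rcases hnbr 3 _ hA7 with hz7 | hz7 | ⟨-, hz7⟩
            · exfalso
              rw [(by norm_num : 3+1 = 4)] at hz7
              have := f.injective (hz7.trans h2.symm)
              have := winj _ _ (by omega) (by omega) this; omega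
            · exfalso
              rw [(by omega : 3+(n-1) = 2 + n), wadd 2] at hz7
              have := f.injective (hz7.trans hf4'.symm)
              have := winj _ _ (by omega) (by omega) this; omega
            · rwa [(by omega : 3 + m = 7)] at hz7
          have hA8 : G.Adj (w 7) (w 1) := by
            have h78 := (hfadj _ _).1 (hcyc 7)
            rw [hf7] at h78
            rw [(by omega : (7:ℕ)+1 = 0 + n), wadd 0, h01'] at h78
            exact h78
          rcases hnbr 7 _ hA8 with hz8 | hz8 | ⟨-, hz8⟩
          · rw [(by omega : (7:ℕ)+1 = 0+n), wadd 0] at hz8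
            have := winj _ _ (by omega) (by omega) hz8; omega
          · rw [(by omega : 7+(n-1) = 6+n), wadd 6] at hz8
            have := winj _ _ (by omega) (by omega) hz8; omega
          · rw [(by omega : 7+m = 3+n), wadd 3] at hz8
            have := winj _ _ (by omega) (by omega) hz8; omega
    have hf0 : f (w 0) = w 0 := by
      have := (hfP _ _).1 h01
      rw [hf1] at this
      have := hsym _ _ this
      rcases hElim 1 _ (by omega) this with ⟨e1,z1⟩|⟨e1,z1⟩|⟨e1,z1⟩|⟨e1,z1⟩|⟨e1,z1⟩|⟨e1,z1⟩ <;>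
        first | omega | exact z1
    have hf2 : f (w 2) = w 2 := by
      rcases hf24 with h2 | h2
      · exact h2
      exfalso
      have hA : G.Adj (w 1) (w 4) := by
        have := (hfadj _ _).1 a12
        rwa [hf1, h2] at this
      rcases hnbr 1 _ hA with hz | hz | ⟨hD, hz⟩
      · rw [(by norm_num : 1+1 = 2)] at hz
        have := winj _ _ (by omega) (by omega) hz; omega
      · rw [(by omega : 1+(n-1) = 0+n), wadd 0] at hz
        have := winj _ _ (by omega) (by omega) hz; omega
      · have h2m := hDm hD; have h4m := hm4 hD
        have := winj _ _ (by omega) (by omega) hz; omega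
    have hf4 : f (w 4) = w 4 := by
      rcases hf42 with h4 | h4
      · exfalso
        have := f.injective (h4.trans hf2.symm)
        have := winj _ _ (by omega) (by omega) this; omega
      · exact h4
    have hf3m : D → f (w (3+m)) = w (3+m) := by
      intro hD
      have h2m := hDm hD; have h4m := hm4 hD
      have hA : G.Adj (w 3) (f (w (3+m))) := by
        have := (hfadj _ _).1 (hdiam hD 3)
        rwa [hf3] at this
      rcases hnbr 3 _ hA with hz | hz | ⟨-, hz⟩
      · exfalso
        rw [(by norm_num : 3+1 = 4)] at hz
        have := f.injective (hz.trans hf4.symm)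
        have := winj _ _ (by omega) (by omega) this; omega
      · exfalso
        rw [(by omega : 3+(n-1) = 2+n), wadd 2] at hz
        have := f.injective (hz.trans hf2.symm)
        have := winj _ _ (by omega) (by omega) this; omega
      · exact hz
    have hf4m : D → f (w (4+m)) = w (4+m) := by
      intro hD
      have h2m := hDm hD; have h4m := hm4 hD
      have hA : G.Adj (w 4) (f (w (4+m))) := by
        have := (hfadj _ _).1 (hdiam hD 4)
        rwa [hf4] at this
      rcases hnbr 4 _ hA with hz | hz | ⟨-, hz⟩
      · exfalso
        rw [(by norm_num : 4+1 = 5)] at hz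
        have hB : G.Adj (w (3+m)) (w 5) := by
          have hc := hcyc (3+m)
          rw [(by omega : 3+m+1 = 4+m)] at hc
          have := (hfadj _ _).1 hc
          rwa [hf3m hD, hz] at this
        rcases hnbr (3+m) _ hB with hz2 | hz2 | ⟨-, hz2⟩
        · rw [(by omega : 3+m+1 = 5+(m-1))] at hz2
          exact wne 5 (m-1) (by omega) (by omega) hz2
        · rw [(by omega : 3+m+(n-1) = (2+m)+n), wadd] at hz2
          have := winj _ _ (by omega) (by omega) hz2; omega
        · rw [(by omega : 3+m+m = 3+n), wadd 3] at hz2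
          have := winj _ _ (by omega) (by omega) hz2; omega
      · exfalso
        rw [(by omega : 4+(n-1) = 3+n), wadd 3] at hz
        have := f.injective (hz.trans hf3.symm)
        have hw : w 3 = w (3+(m+1)) := by
          rw [(by omega : 3+(m+1) = 4+m)]; exact this.symm
        exact wne 3 (m+1) (by omega) (by omega) hw
      · exact hz
    have hQ : ∀ t, f (w (t+3)) = w (t+3) ∧ f (w (t+4)) = w (t+4) ∧
        (D → f (w (t+3+m)) = w (t+3+m) ∧ f (w (t+4+m)) = w (t+4+m)) := by
      intro t
      induction t with
      | zero => exact ⟨by simpa using hf3, by simpa using hf4,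
          fun hD => ⟨by simpa using hf3m hD, by simpa using hf4m hD⟩⟩
      | succ t ih =>
        obtain ⟨ih3, ih4, ihD⟩ := ih
        have key5 : f (w (t+5)) = w (t+5) := by
          have hA : G.Adj (w (t+4)) (f (w (t+5))) := by
            have := (hfadj _ _).1 (hcyc (t+4))
            rwa [ih4] at this
          rcases hnbr (t+4) _ hA with hz | hz | ⟨hD, hz⟩
          · exact hz
          · exfalso
            rw [(by omega : t+4+(n-1) = (t+3)+n), wadd (t+3)] at hz
            have hthis := f.injective (hz.trans ih3.symm)
            have hw : w (t+3) = w (t+3+2) := by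
              rw [(by omega : t+3+2 = t+5)]; exact hthis.symm
            exact wne (t+3) 2 (by omega) (by omega) hw
          · exfalso
            have h2m := hDm hD; have h4m := hm4 hD
            have hthis := f.injective (hz.trans ((ihD hD).2).symm)
            have hw : w (t+5) = w (t+5+(m-1)) := by
              rw [(by omega : t+5+(m-1) = t+4+m)]; exact hthis
            exact wne (t+5) (m-1) (by omega) (by omega) hw
        have key5m : D → f (w (t+5+m)) = w (t+5+m) := by
          intro hD
          have h2m := hDm hD; have h4m := hm4 hD
          obtain ⟨ih3m, ih4m⟩ := ihD hD
          have hA : G.Adj (w (t+4+m)) (f (w (t+5+m))) := by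
            have hc := hcyc (t+4+m)
            rw [(by omega : t+4+m+1 = t+5+m)] at hc
            have := (hfadj _ _).1 hc
            rwa [ih4m] at this
          rcases hnbr (t+4+m) _ hA with hz | hz | ⟨-, hz⟩
          · rwa [(by omega : t+4+m+1 = t+5+m)] at hz
          · exfalso
            rw [(by omega : t+4+m+(n-1) = (t+3+m)+n), wadd] at hz
            have hthis := f.injective (hz.trans ih3m.symm)
            have hw : w (t+3+m) = w (t+3+m+2) := by
              rw [(by omega : t+3+m+2 = t+5+m)]; exact hthis.symm
            exact wne (t+3+m) 2 (by omega) (by omega) hw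
          · exfalso
            rw [(by omega : t+4+m+m = (t+4)+n), wadd] at hz
            have hthis := f.injective (hz.trans ih4.symm)
            have hw : w (t+4) = w (t+4+(m+1)) := by
              rw [(by omega : t+4+(m+1) = t+5+m)]; exact hthis.symm
            exact wne (t+4) (m+1) (by omega) (by omega) hw
        exact ⟨ih4, key5, fun hD => ⟨(ihD hD).2, key5m hD⟩⟩
    intro x
    obtain ⟨j, hj, rfl⟩ := wsurj x
    have hfin := (hQ (j+n-3)).1
    rw [(by omega : j+n-3+3 = j+n)] at hfin
    rwa [wadd j] at hfin

lemma case3 (hn : 7 ≤ n)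
    (winj : ∀ i j, i < n → j < n → w i = w j → i = j)
    (wsurj : ∀ a : V, ∃ i, i < n ∧ w i = a)
    (wadd : ∀ i, w (i + n) = w i)
    (hadj : ∀ i, i + 2 ≤ n → G.Adj (w i) (w (i+1)))
    (hρ : ∀ i j, i < n → j < n →
      (G.Adj (w i) (w j) ↔ G.Adj (w (n-1-i)) (w (n-1-j))))
    (hσ : ∀ i j, i < n → j < n →
      (G.Adj (w i) (w j) ↔ G.Adj (w (if i = 0 then 0 else n - i)) (w (if j = 0 then 0 else n - j)))) :
    GoodP G := by
  have wmod : ∀ i, w i = w (i % n) := by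
    intro i
    induction i using Nat.strong_induction_on with
    | _ i ih =>
      rcases Nat.lt_or_ge i n with h | h
      · rw [Nat.mod_eq_of_lt h]
      · calc w i = w (i - n + n) := by rw [(by omega : i - n + n = i)]
          _ = w (i - n) := wadd _
          _ = w ((i - n) % n) := ih _ (by omega)
          _ = w (i % n) := by rw [← Nat.mod_eq_sub_mod h]
  have waddk : ∀ (q a : ℕ), w (a + q * n) = w a := by
    intro q
    induction q with
    | zero => intro a; simp
    | succ q ih =>
      intro a
      rw [(by ring : a + (q+1) * n = (a + q * n) + n), wadd, ih]
  have wshiftmod : ∀ i d, w (i + d) = w (i % n + d) := by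
    intro i d
    obtain ⟨q, r, hr, rfl⟩ : ∃ q r, r < n ∧ i = r + q * n :=
      ⟨i/n, i%n, Nat.mod_lt _ (by omega), by
        rw [Nat.add_comm, Nat.mul_comm]; exact (Nat.div_add_mod i n).symm⟩
    rw [Nat.add_mul_mod_self_right, Nat.mod_eq_of_lt hr,
      (by ring : r + q*n + d = (r + d) + q*n), waddk]
  -- the shift by one is an automorphism
  have hτb : ∀ i j, i < n → j < n →
      (G.Adj (w i) (w j) ↔ G.Adj (w (i+1)) (w (j+1))) := by
    intro i j hi hj
    rw [hρ i j hi hj, hσ (n-1-i) (n-1-j) (by omega) (by omega)]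
    have e1 : ∀ i', i' < n → w (if n-1-i' = 0 then 0 else n - (n-1-i')) = w (i'+1) := by
      intro i' hi'
      by_cases h : i' = n-1
      · rw [if_pos (by omega)]
        subst h
        rw [(by omega : n-1+1 = 0+n), wadd 0]
      · rw [if_neg (by omega), (by omega : n - (n-1-i') = i'+1)]
    rw [e1 i hi, e1 j hj]
  have hτ : ∀ i j, G.Adj (w i) (w j) ↔ G.Adj (w (i+1)) (w (j+1)) := by
    intro i j
    rw [wmod i, wmod j, hτb (i % n) (j % n) (Nat.mod_lt _ (by omega)) (Nat.mod_lt _ (by omega)),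
      ← wshiftmod i 1, ← wshiftmod j 1]
  have hshift : ∀ k i j, G.Adj (w i) (w j) ↔ G.Adj (w (i+k)) (w (j+k)) := by
    intro k
    induction k with
    | zero => intro i j; rfl
    | succ k ih =>
      intro i j
      rw [ih i j, hτ (i+k) (j+k)]
      rfl
  have eAdj : ∀ i d, G.Adj (w i) (w (i+d)) ↔ G.Adj (w 0) (w d) := by
    intro i d
    rw [hshift i 0 d, Nat.zero_add, Nat.add_comm d i]
  have he1 : G.Adj (w 0) (w 1) := by simpa using hadj 0 (by omega)
  have hcyc : ∀ j, G.Adj (w j) (w (j+1)) := fun j => (eAdj j 1).2 he1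
  have hesymm : ∀ d, d ≤ n → G.Adj (w 0) (w d) → G.Adj (w 0) (w (n-d)) := by
    intro d hd he
    have h2 := (hshift (n-d) 0 d).1 he
    rw [Nat.zero_add, (by omega : d + (n-d) = 0 + n), wadd 0] at h2
    exact h2.symm
  by_cases hsp : ∃ k, 2 ≤ k ∧ k + 4 ≤ n ∧ 2*k ≠ n-2 ∧ G.Adj (w k) (w (n-1))
  · obtain ⟨k, hk2, hk4, hkm, hchord⟩ := hsp
    exact case3a hn winj wsurj hadj hk2 hk4 hkm hchord
  · push_neg at hsp
    have hnoE : ∀ d, 3 ≤ d → d+3 ≤ n → 2*d ≠ n → ¬ G.Adj (w 0) (w d) := by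
      intro d h3 hd3 h2d he
      refine hsp (n-1-d) (by omega) (by omega) (by omega) ?_
      have := (eAdj (n-1-d) d).2 he
      rwa [(by omega : n-1-d+d = n-1)] at this
    by_cases h2 : G.Adj (w 0) (w 2)
    · refine case3bi hn winj wsurj hadj h2 ?_ ?_
      · have := (eAdj 1 2).2 h2
        rwa [(by norm_num : 1+2 = 3)] at this
      · intro hadj'
        have h3' : G.Adj (w (n-4)) (w (n-1)) := hadj'.symm
        have := (eAdj (n-4) 3).1 (by rwa [(by omega : n-4+3 = n-1)])
        exact hnoE 3 (by omega) (by omega) (by omega) this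
    · -- remaining : cycle plus possibly diameters
      have hclass : ∀ d, 1 ≤ d → d ≤ n-1 → G.Adj (w 0) (w d) →
          (d = 1 ∨ d = n-1 ∨ (2*d = n)) := by
        intro d h1 hd he
        by_contra hcon
        push_neg at hcon
        obtain ⟨hc1, hc2, hc3⟩ := hcon
        have : d = 2 ∨ d = n-2 ∨ (3 ≤ d ∧ d+3 ≤ n) := by omega
        rcases this with rfl | rfl | ⟨ha, hb⟩
        · exact h2 he
        · have := hesymm (n-2) (by omega) he
          rw [(by omega : n-(n-2) = 2)] at this
          exact h2 this
        · exact hnoE d ha hb hc3 he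
      apply case3bii hn winj wsurj wadd hcyc
        (n % 2 = 0 ∧ G.Adj (w 0) (w (n/2))) (n/2)
      · rintro ⟨hpar, -⟩
        omega
      · rintro ⟨hpar, hdm⟩ j
        exact (eAdj j (n/2)).2 hdm
      · intro j z hA
        obtain ⟨l, hl, rfl⟩ := wsurj z
        rw [wmod j] at hA
        have hrlt : j % n < n := Nat.mod_lt _ (by omega)
        rcases Nat.lt_or_ge l (j % n) with hlt | hge
        · -- l < j % n
          have hd : G.Adj (w 0) (w (j % n - l)) := by
            have := (eAdj l (j % n - l)).1 (by
              rw [(by omega : l + (j % n - l) = j % n)]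
              exact hA.symm)
            exact this
          rcases hclass _ (by omega) (by omega) hd with h | h | h
          · refine Or.inr (Or.inl ?_)
            rw [wshiftmod j (n-1), (by omega : j % n + (n-1) = l + n), wadd]
          · refine Or.inl ?_
            rw [wshiftmod j 1, (by omega : j % n + 1 = l + n), wadd]
          · refine Or.inr (Or.inr ⟨⟨by omega, by rwa [(by omega : n/2 = j % n - l)]⟩, ?_⟩)
            rw [wshiftmod j (n/2), (by omega : j % n + n/2 = l + n), wadd]
        · -- l ≥ j % n
          have hne : l ≠ j % n := by
            intro h
            rw [h] at hA
            exact G.irrefl hA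
          have hd : G.Adj (w 0) (w (l - j % n)) := by
            have := (eAdj (j % n) (l - j % n)).1 (by
              rwa [(by omega : j % n + (l - j % n) = l)])
            exact this
          rcases hclass _ (by omega) (by omega) hd with h | h | h
          · refine Or.inl ?_
            rw [wshiftmod j 1, (by omega : j % n + 1 = l)]
          · refine Or.inr (Or.inl ?_)
            rw [wshiftmod j (n-1), (by omega : j % n + (n-1) = l)]
          · refine Or.inr (Or.inr ⟨⟨by omega, by rwa [(by omega : n/2 = l - j % n)]⟩, ?_⟩)
            rw [wshiftmod j (n/2), (by omega : j % n + n/2 = l)]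

end DI2

theorem distinguishingIndex_le_two_of_hamiltonianPath {V : Type*} [Fintype V] [DecidableEq V]
    (G : SimpleGraph V) (h7 : 7 ≤ Fintype.card V) (hp : HasHamiltonianPath G) :
    distinguishingIndex G ≤ 2 := by
  classical
  obtain ⟨u, v0, p, hham⟩ := hp
  set n := Fintype.card V with hndef
  have hlen : p.support.length = n := by
    have h1 : p.length = n - 1 := hham.length_eq
    have h2 : p.support.length = p.length + 1 := SimpleGraph.Walk.length_support p
    omega
  have hnd : p.support.Nodup := hham.isPath.support_nodup
  have hnpos : 0 < n := by omega
  have hmodlt : ∀ i : ℕ, i % n < p.support.length := by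
    intro i; rw [hlen]; exact Nat.mod_lt _ hnpos
  set w : ℕ → V := fun i => p.support.get ⟨i % n, hmodlt i⟩ with hwdef
  have hwlt : ∀ (i : ℕ) (hi : i < n), w i = p.support.get ⟨i, by omega⟩ := by
    intro i hi
    simp only [hwdef]
    congr 1
    exact Fin.ext (Nat.mod_eq_of_lt hi)
  have winj : ∀ i j, i < n → j < n → w i = w j → i = j := by
    intro i j hi hj hw
    rw [hwlt i hi, hwlt j hj] at hw
    have := (List.Nodup.get_inj_iff hnd).1 hw
    exact congrArg Fin.val this
  have wsurj : ∀ a : V, ∃ i, i < n ∧ w i = a := by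
    intro a
    obtain ⟨idx, hidx⟩ := List.mem_iff_get.1 (hham.mem_support a)
    refine ⟨idx.val, by omega, ?_⟩
    rw [hwlt idx.val (by omega)]
    simpa using hidx
  have wadd : ∀ i, w (i + n) = w i := by
    intro i
    simp only [hwdef]
    congr 1
    exact Fin.ext (Nat.add_mod_right i n)
  have hadj : ∀ i, i + 2 ≤ n → G.Adj (w i) (w (i+1)) := by
    intro i hi
    rw [hwlt i (by omega), hwlt (i+1) (by omega)]
    have hc := SimpleGraph.Walk.isChain_adj_support p
    exact hc.getElem i (by omega)
  by_cases hρ : ∀ i j, i < n → j < n →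
      (G.Adj (w i) (w j) ↔ G.Adj (w (n-1-i)) (w (n-1-j)))
  · by_cases hσ : ∀ i j, i < n → j < n →
        (G.Adj (w i) (w j) ↔ G.Adj (w (if i = 0 then 0 else n - i)) (w (if j = 0 then 0 else n - j)))
    · exact DI2.good_le (DI2.case3 h7 winj wsurj wadd hadj hρ hσ)
    · exact DI2.good_le (DI2.case2 h7 winj wsurj hadj hσ)
  · exact DI2.good_le (DI2.case1 h7 winj wsurj hadj hρ)
end

section
/- For all integers n, m ≥ 2 with n ≠ m, the distinguishing index of the join of paths satisfies D'(Pₙ + Pₘ) = 2. -/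
open SimpleGraph

namespace JPAux

open SimpleGraph

def rv {N : ℕ} (k : Fin N) : Fin N := ⟨N - 1 - k.val, by have := k.isLt; omega⟩

lemma rv_rv {N : ℕ} (k : Fin N) : rv (rv k) = k := by
  have := k.isLt; apply Fin.ext; simp only [rv]; omega

lemma path_id_of_zero {N : ℕ} (g : pathGraph N ≃g pathGraph N)
    (z : Fin N) (hz : z.val = 0) (h0 : g z = z) : ∀ k, g k = k := by
  have key : ∀ k : ℕ, ∀ hk : k < N, g ⟨k, hk⟩ = ⟨k, hk⟩ := by
    intro k
    induction k using Nat.strong_induction_on with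
    | _ k IH =>
      intro hk
      match k, hk with
      | 0, hk =>
        have hzz : z = ⟨0, hk⟩ := Fin.ext hz
        rw [← hzz]; exact h0
      | 1, hk =>
        have hN : 0 < N := by omega
        have hadj : (pathGraph N).Adj ⟨0, hN⟩ ⟨1, hk⟩ := by
          rw [pathGraph_adj]; left; rfl
        have h2 := g.map_rel_iff.mpr hadj
        have hzz : z = ⟨0, hN⟩ := Fin.ext hz
        rw [← hzz, h0, hzz, pathGraph_adj] at h2
        have hv := (g ⟨1, hk⟩).isLt
        apply Fin.ext
        simp only [Fin.val_mk] at h2 ⊢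
        omega
      | (k+2), hk =>
        have h1 : k < N := by omega
        have h2 : k+1 < N := by omega
        have e1 := IH k (by omega) h1
        have e2 := IH (k+1) (by omega) h2
        have hadj : (pathGraph N).Adj ⟨k+1, h2⟩ ⟨k+2, hk⟩ := by
          rw [pathGraph_adj]; left; rfl
        have h3 := g.map_rel_iff.mpr hadj
        rw [e2, pathGraph_adj] at h3
        simp only [Fin.val_mk] at h3
        rcases h3 with h3 | h3
        · apply Fin.ext; simp only [Fin.val_mk]; omega
        · exfalso
          have heq : g ⟨k+2, hk⟩ = ⟨k, h1⟩ := by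
            apply Fin.ext; simp only [Fin.val_mk]; omega
          rw [← e1] at heq
          have := g.toEquiv.injective heq
          simp only [Fin.mk.injEq] at this
          omega
  intro k
  have := key k.val k.isLt
  simpa using this

lemma path_zero_cases {N : ℕ} (hN : 2 ≤ N) (g : pathGraph N ≃g pathGraph N)
    (z : Fin N) (hz : z.val = 0) :
    (g z).val = 0 ∨ (g z).val = N - 1 := by
  by_contra hcon
  push_neg at hcon
  have htl : (g z).val < N := (g z).isLt
  have h1 : 0 < (g z).val := Nat.pos_of_ne_zero hcon.1
  have h2 : (g z).val < N - 1 := lt_of_le_of_ne (by omega) hcon.2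
  have hlt1 : (g z).val - 1 < N := by omega
  have hlt2 : (g z).val + 1 < N := by omega
  have ha : (pathGraph N).Adj (g z) ⟨(g z).val - 1, hlt1⟩ := by
    rw [pathGraph_adj]; right; simp only [Fin.val_mk] <;> omega
  have hb : (pathGraph N).Adj (g z) ⟨(g z).val + 1, hlt2⟩ := by
    rw [pathGraph_adj]; left; simp only [Fin.val_mk] <;> omega
  have ha' : (pathGraph N).Adj z (g.symm ⟨(g z).val - 1, hlt1⟩) := by
    apply g.map_rel_iff.mp
    rw [g.apply_symm_apply]
    exact ha
  have hb' : (pathGraph N).Adj z (g.symm ⟨(g z).val + 1, hlt2⟩) := by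
    apply g.map_rel_iff.mp
    rw [g.apply_symm_apply]
    exact hb
  rw [pathGraph_adj] at ha' hb'
  rw [hz] at ha' hb'
  have hval1 : (g.symm ⟨(g z).val - 1, hlt1⟩).val = 1 := by omega
  have hval2 : (g.symm ⟨(g z).val + 1, hlt2⟩).val = 1 := by omega
  have heq : g.symm ⟨(g z).val - 1, hlt1⟩ = g.symm ⟨(g z).val + 1, hlt2⟩ := by
    apply Fin.ext; rw [hval1, hval2]
  have h5 := g.toEquiv.symm.injective heq
  have h6 := congrArg Fin.val h5
  simp only [Fin.val_mk] at h6
  omega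

lemma path_aut {N : ℕ} (hN : 2 ≤ N) (g : pathGraph N ≃g pathGraph N) :
    (∀ k, g k = k) ∨ (∀ k, g k = rv k) := by
  have hz : ((⟨0, by omega⟩ : Fin N)).val = 0 := rfl
  rcases path_zero_cases hN g ⟨0, by omega⟩ hz with h | h
  · left
    exact path_id_of_zero g ⟨0, by omega⟩ hz (Fin.ext (by rw [h, hz]))
  · right
    let rvIso : pathGraph N ≃g pathGraph N :=
      ⟨⟨rv, rv, rv_rv, rv_rv⟩, by
        intro a b
        have ha := a.isLt; have hb := b.isLt
        simp only [Equiv.coe_fn_mk, pathGraph_adj, rv, Fin.val_mk]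
        omega⟩
    have hglt : (g ⟨0, by omega⟩).val < N := (g _).isLt
    have h0 : (g.trans rvIso) ⟨0, by omega⟩ = ⟨0, by omega⟩ := by
      have h00 : (g.trans rvIso) ⟨0, by omega⟩ = rv (g ⟨0, by omega⟩) := rfl
      rw [h00]
      apply Fin.ext
      show N - 1 - (g ⟨0, by omega⟩).val = 0
      omega
    have hid := path_id_of_zero (g.trans rvIso) ⟨0, by omega⟩ hz h0
    intro k
    have hk : rv (g k) = k := hid k
    have h7 := congrArg rv hk
    rwa [rv_rv] at h7

def pos {n m : ℕ} : Fin n ⊕ Fin m → Fin (n + m)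
  | Sum.inl a => ⟨n - 1 - a.val, by have := a.isLt; omega⟩
  | Sum.inr b => ⟨n + b.val, by have := b.isLt; omega⟩

def ord {n m : ℕ} (k : Fin (n + m)) : Fin n ⊕ Fin m :=
  if h : k.val < n then Sum.inl ⟨n - 1 - k.val, by omega⟩
  else Sum.inr ⟨k.val - n, by have := k.isLt; omega⟩

lemma ord_eq_inl {n m : ℕ} {k : Fin (n + m)} (h : k.val < n) :
    ord k = Sum.inl ⟨n - 1 - k.val, by omega⟩ := dif_pos h

lemma ord_eq_inr {n m : ℕ} {k : Fin (n + m)} (h : ¬ k.val < n) :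
    ord k = Sum.inr ⟨k.val - n, by have := k.isLt; omega⟩ := dif_neg h

lemma ord_pos {n m : ℕ} (v : Fin n ⊕ Fin m) : ord (pos v) = v := by
  match v with
  | Sum.inl a =>
    have ha := a.isLt
    rw [show pos (Sum.inl a) = ⟨n - 1 - a.val, by omega⟩ from rfl,
      ord_eq_inl (by simp only [Fin.val_mk]; omega)]
    congr 1
    apply Fin.ext
    simp only [Fin.val_mk]
    omega
  | Sum.inr b =>
    have hb := b.isLt
    rw [show pos (Sum.inr b) = ⟨n + b.val, by omega⟩ from rfl,
      ord_eq_inr (by simp only [Fin.val_mk]; omega)]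
    congr 1
    apply Fin.ext
    simp only [Fin.val_mk]
    omega

lemma pos_ord {n m : ℕ} (k : Fin (n + m)) : pos (ord k) = k := by
  have hk := k.isLt
  by_cases h : k.val < n
  · rw [ord_eq_inl h]
    apply Fin.ext
    show n - 1 - (n - 1 - k.val) = k.val
    omega
  · rw [ord_eq_inr h]
    apply Fin.ext
    show n + (k.val - n) = k.val
    omega

lemma adj_of_pathAdj {n m : ℕ} {p q : Fin (n + m)}
    (h : (pathGraph (n + m)).Adj p q) :
    (joinGraph (pathGraph n) (pathGraph m)).Adj (ord p) (ord q) := by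
  rw [pathGraph_adj] at h
  have hp := p.isLt; have hq := q.isLt
  by_cases h1 : p.val < n <;> by_cases h2 : q.val < n
  · rw [ord_eq_inl h1, ord_eq_inl h2]
    show (pathGraph n).Adj _ _
    rw [pathGraph_adj]
    simp only [Fin.val_mk]
    omega
  · rw [ord_eq_inl h1, ord_eq_inr h2]; trivial
  · rw [ord_eq_inr h1, ord_eq_inl h2]; trivial
  · rw [ord_eq_inr h1, ord_eq_inr h2]
    show (pathGraph m).Adj _ _
    rw [pathGraph_adj]
    simp only [Fin.val_mk]
    omega

open Classical in
noncomputable def col {n m : ℕ} : Sym2 (Fin n ⊕ Fin m) → Fin 2 :=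
  fun e => if Sym2.map pos e ∈ (pathGraph (n + m)).edgeSet then 1 else 0

lemma col_eq_one {n m : ℕ} (u v : Fin n ⊕ Fin m) :
    col s(u, v) = 1 ↔ (pathGraph (n + m)).Adj (pos u) (pos v) := by
  unfold col
  rw [Sym2.map_pair_eq]
  split_ifs with h
  · exact iff_of_true rfl ((SimpleGraph.mem_edgeSet _).mp h)
  · exact iff_of_false (by decide) (fun ha => h ((SimpleGraph.mem_edgeSet _).mpr ha))

lemma col_pres_symm {n m : ℕ}
    (f : joinGraph (pathGraph n) (pathGraph m) ≃g joinGraph (pathGraph n) (pathGraph m))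
    (hc : ∀ e ∈ (joinGraph (pathGraph n) (pathGraph m)).edgeSet,
      col (Sym2.map (⇑f) e) = col e) :
    ∀ e ∈ (joinGraph (pathGraph n) (pathGraph m)).edgeSet,
      col (Sym2.map (⇑f.symm) e) = col e := by
  intro e he
  induction e with
  | _ u v =>
    rw [SimpleGraph.mem_edgeSet] at he
    have he' : (joinGraph (pathGraph n) (pathGraph m)).Adj (f.symm u) (f.symm v) :=
      f.symm.map_rel_iff.mpr he
    have h2 := hc s(f.symm u, f.symm v) ((SimpleGraph.mem_edgeSet _).mpr he')
    rw [Sym2.map_pair_eq, f.apply_symm_apply, f.apply_symm_apply] at h2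
    rw [Sym2.map_pair_eq]
    exact h2.symm

lemma step {n m : ℕ}
    (f : joinGraph (pathGraph n) (pathGraph m) ≃g joinGraph (pathGraph n) (pathGraph m))
    (hc : ∀ e ∈ (joinGraph (pathGraph n) (pathGraph m)).edgeSet,
      col (Sym2.map (⇑f) e) = col e)
    {u v : Fin n ⊕ Fin m} (h : (pathGraph (n + m)).Adj (pos u) (pos v)) :
    (pathGraph (n + m)).Adj (pos (f u)) (pos (f v)) := by
  have hG : (joinGraph (pathGraph n) (pathGraph m)).Adj u v := by
    have h2 := adj_of_pathAdj h
    rwa [ord_pos, ord_pos] at h2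
  have h3 := hc s(u, v) ((SimpleGraph.mem_edgeSet _).mpr hG)
  rw [Sym2.map_pair_eq] at h3
  rw [← col_eq_one, h3, col_eq_one]
  exact h

lemma two_mem {n m : ℕ} (hn : 2 ≤ n) (hm : 2 ≤ m) (hnm : n ≠ m)
    (f : joinGraph (pathGraph n) (pathGraph m) ≃g joinGraph (pathGraph n) (pathGraph m))
    (hc : ∀ e ∈ (joinGraph (pathGraph n) (pathGraph m)).edgeSet,
      col (Sym2.map (⇑f) e) = col e) :
    ∀ v, f v = v := by
  have hc' := col_pres_symm f hc
  have hN : 2 ≤ n + m := by omega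
  let gE : Fin (n + m) ≃ Fin (n + m) :=
    { toFun := fun k => pos (f (ord k))
      invFun := fun k => pos (f.symm (ord k))
      left_inv := by intro k; simp only; rw [ord_pos, RelIso.symm_apply_apply, pos_ord]
      right_inv := by intro k; simp only; rw [ord_pos, RelIso.apply_symm_apply, pos_ord] }
  let g : pathGraph (n + m) ≃g pathGraph (n + m) :=
    ⟨gE, by
      intro a b
      constructor
      · intro h
        have h2 := step f.symm hc' (u := f (ord a)) (v := f (ord b)) h
        rwa [RelIso.symm_apply_apply, RelIso.symm_apply_apply, pos_ord, pos_ord] at h2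
      · intro h
        have h1 : (pathGraph (n + m)).Adj (pos (ord a)) (pos (ord b)) := by
          rwa [pos_ord, pos_ord]
        exact step f hc h1⟩
  rcases path_aut hN g with hid | hrev
  · intro v
    have h2 : pos (f (ord (pos v))) = pos v := hid (pos v)
    rw [ord_pos] at h2
    have h3 := congrArg ord h2
    rwa [ord_pos, ord_pos] at h3
  · exfalso
    have key : ∀ k, f (ord k) = ord (rv k) := by
      intro k
      have hk : pos (f (ord k)) = rv k := hrev k
      have h2 := congrArg ord hk
      rwa [ord_pos] at h2
    rcases Nat.lt_or_ge n m with hlt | hge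
    · have hp : m + 1 < n + m := by omega
      have hq : m - 1 < n + m := by omega
      have hyes : (joinGraph (pathGraph n) (pathGraph m)).Adj
          (f (ord ⟨m+1, hp⟩)) (f (ord ⟨m-1, hq⟩)) := by
        rw [key, key,
          ord_eq_inl (k := rv ⟨m+1, hp⟩) (show n + m - 1 - (m+1) < n by omega),
          ord_eq_inr (k := rv ⟨m-1, hq⟩) (show ¬ (n + m - 1 - (m-1) < n) by omega)]
        trivial
      have hno : ¬ (joinGraph (pathGraph n) (pathGraph m)).Adj
          (ord ⟨m+1, hp⟩) (ord ⟨m-1, hq⟩) := by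
        rw [ord_eq_inr (k := ⟨m+1, hp⟩) (show ¬ (m+1 < n) by omega),
          ord_eq_inr (k := ⟨m-1, hq⟩) (show ¬ (m-1 < n) by omega)]
        show ¬ (pathGraph m).Adj _ _
        rw [pathGraph_adj]
        show ¬ (m+1-n + 1 = m-1-n ∨ m-1-n + 1 = m+1-n)
        omega
      exact hno (f.map_rel_iff.mp hyes)
    · have hmn : m < n := lt_of_le_of_ne hge (Ne.symm hnm)
      have hp : m < n + m := by omega
      have hq : m - 2 < n + m := by omega
      have hyes : (joinGraph (pathGraph n) (pathGraph m)).Adj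
          (f (ord ⟨m, hp⟩)) (f (ord ⟨m-2, hq⟩)) := by
        rw [key, key,
          ord_eq_inl (k := rv ⟨m, hp⟩) (show n + m - 1 - m < n by omega),
          ord_eq_inr (k := rv ⟨m-2, hq⟩) (show ¬ (n + m - 1 - (m-2) < n) by omega)]
        trivial
      have hno : ¬ (joinGraph (pathGraph n) (pathGraph m)).Adj
          (ord ⟨m, hp⟩) (ord ⟨m-2, hq⟩) := by
        rw [ord_eq_inl (k := ⟨m, hp⟩) (show m < n by omega),
          ord_eq_inl (k := ⟨m-2, hq⟩) (show m-2 < n by omega)]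
        show ¬ (pathGraph n).Adj _ _
        rw [pathGraph_adj]
        show ¬ (n-1-m + 1 = n-1-(m-2) ∨ n-1-(m-2) + 1 = n-1-m)
        omega
      exact hno (f.map_rel_iff.mp hyes)

/-- the reversal automorphism of the join, reversing the left path -/
def revJoin (n m : ℕ) :
    joinGraph (pathGraph n) (pathGraph m) ≃g joinGraph (pathGraph n) (pathGraph m) :=
  ⟨Equiv.sumCongr ⟨rv, rv, rv_rv, rv_rv⟩ (Equiv.refl (Fin m)), by
    rintro (a | a) (b | b)
    · show (pathGraph n).Adj (rv a) (rv b) ↔ (pathGraph n).Adj a b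
      have ha := a.isLt; have hb := b.isLt
      rw [pathGraph_adj, pathGraph_adj]
      show (n - 1 - a.val) + 1 = n - 1 - b.val ∨ (n - 1 - b.val) + 1 = n - 1 - a.val ↔ _
      omega
    · exact Iff.rfl
    · exact Iff.rfl
    · exact Iff.rfl⟩

lemma one_not_mem {n m : ℕ} (hn : 2 ≤ n) :
    ¬ ∃ c : Sym2 (Fin n ⊕ Fin m) → Fin 1,
      ∀ f : joinGraph (pathGraph n) (pathGraph m) ≃g joinGraph (pathGraph n) (pathGraph m),
        (∀ e ∈ (joinGraph (pathGraph n) (pathGraph m)).edgeSet,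
          c (Sym2.map (⇑f) e) = c e) → ∀ v, f v = v := by
  rintro ⟨c, hc⟩
  have h1 := hc (revJoin n m) (fun e _ => Subsingleton.elim _ _)
    (Sum.inl ⟨0, by omega⟩)
  have h2 : Sum.inl (β := Fin m) (rv (⟨0, by omega⟩ : Fin n)) = Sum.inl ⟨0, by omega⟩ := h1
  have h3 := congrArg Fin.val (Sum.inl_injective h2)
  have h4 : n - 1 - 0 = 0 := h3
  omega

lemma sInf_eq_two {S : Set ℕ} (h2 : 2 ∈ S) (h0 : 0 ∉ S) (h1 : 1 ∉ S) : sInf S = 2 := by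
  refine le_antisymm (Nat.sInf_le h2) (le_csInf ⟨2, h2⟩ ?_)
  intro b hb
  by_contra hlt
  push_neg at hlt
  interval_cases b
  · exact h0 hb
  · exact h1 hb

end JPAux

theorem distinguishingIndex_join_paths (n m : ℕ) (hn : 2 ≤ n) (hm : 2 ≤ m) (hnm : n ≠ m) :
    distinguishingIndex (joinGraph (SimpleGraph.pathGraph n) (SimpleGraph.pathGraph m)) = 2 := by
  rw [distinguishingIndex]
  apply JPAux.sInf_eq_two
  · exact ⟨JPAux.col, fun f hf => JPAux.two_mem hn hm hnm f hf⟩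
  · rintro ⟨c, -⟩
    exact (c s(Sum.inl ⟨0, by omega⟩, Sum.inl ⟨0, by omega⟩)).elim0
  · exact JPAux.one_not_mem hn
end

section
/- For n ≥ 2, the distinguishing index of the friendship graph Fₙ equals ⌈(1/3)·aₙ^{1/3} + 1/(3·aₙ^{1/3}) + 1/3⌉, where aₙ = 1 + 27n + 3√(81n² + 6n). -/
open SimpleGraph

-- basic adjacency facts
abbrev Vtx (n : ℕ) := Fin 1 ⊕ (Fin n × Fin 2)

lemma fg_adj_lr {n : ℕ} (a : Fin 1) (w : Fin n × Fin 2) :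
    (friendshipGraph n).Adj (Sum.inl a) (Sum.inr w) := trivial

lemma fg_adj_rl {n : ℕ} (a : Fin 1) (w : Fin n × Fin 2) :
    (friendshipGraph n).Adj (Sum.inr w) (Sum.inl a) := trivial

lemma fg_adj_rr {n : ℕ} (w w' : Fin n × Fin 2) :
    (friendshipGraph n).Adj (Sum.inr w) (Sum.inr w') ↔ w.1 = w'.1 ∧ w.2 ≠ w'.2 := Iff.rfl

lemma fg_not_adj_ll {n : ℕ} (a b : Fin 1) :
    ¬ (friendshipGraph n).Adj (Sum.inl a) (Sum.inl b) := by
  intro h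
  exact (h : a ≠ b) (Subsingleton.elim a b)

lemma center_fixed {n : ℕ} (hn : 2 ≤ n) (f : friendshipGraph n ≃g friendshipGraph n) :
    f (Sum.inl 0) = Sum.inl 0 := by
  cases h : f (Sum.inl 0) with
  | inl a => exact congrArg Sum.inl (Subsingleton.elim a 0)
  | inr w =>
    exfalso
    obtain ⟨i, k⟩ := w
    have : NeZero n := ⟨by omega⟩
    set j : Fin n := if i = 0 then ⟨1, by omega⟩ else 0 with hj
    have hji : j ≠ i := by
      rcases eq_or_ne i 0 with h0 | h0
      · rw [hj, if_pos h0, h0]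
        intro hc; exact absurd (congrArg Fin.val hc) (by simp)
      · rw [hj, if_neg h0]; exact fun hc => h0 hc.symm
    obtain ⟨w, hfw⟩ : ∃ w, f w = Sum.inr (j, 0) := ⟨f.symm _, f.apply_symm_apply _⟩
    cases w with
    | inl a =>
      rw [Subsingleton.elim a 0, h] at hfw
      exact hji (congrArg (fun x => x.1) (Sum.inr.inj hfw)).symm
    | inr u =>
      have hadj : (friendshipGraph n).Adj (Sum.inl 0) (Sum.inr u) := fg_adj_lr _ _
      have h2 := f.map_rel_iff.mpr hadj
      rw [h, hfw] at h2
      exact hji ((fg_adj_rr _ _).mp h2).1.symm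

lemma perm2_invol (π : Equiv.Perm (Fin 2)) (k : Fin 2) : π (π k) = k := by
  revert π k; decide

/-- swap triangles `i` and `j` (possibly `i = j`), matching positions via `π`. -/
def triSwap {n : ℕ} (i j : Fin n) (π : Equiv.Perm (Fin 2)) : Vtx n → Vtx n
  | Sum.inl a => Sum.inl a
  | Sum.inr (l, k) =>
      if l = i then Sum.inr (j, π k) else if l = j then Sum.inr (i, π k) else Sum.inr (l, k)

lemma triSwap_invol {n : ℕ} (i j : Fin n) (π : Equiv.Perm (Fin 2)) :
    Function.Involutive (triSwap i j π) := by
  rintro (a | ⟨l, k⟩)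
  · rfl
  · by_cases hli : l = i
    · subst hli
      rcases eq_or_ne j l with hji | hji
      · simp [triSwap, hji, perm2_invol]
      · simp [triSwap, hji, perm2_invol]
    · by_cases hlj : l = j
      · subst hlj
        simp [triSwap, hli, perm2_invol]
      · simp [triSwap, hli, hlj]

lemma triSwap_inl {n : ℕ} (i j : Fin n) (π : Equiv.Perm (Fin 2)) (a : Fin 1) :
    triSwap i j π (Sum.inl a) = Sum.inl a := rfl

lemma triSwap_inr {n : ℕ} (i j : Fin n) (π : Equiv.Perm (Fin 2)) (l : Fin n) (k : Fin 2) :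
    triSwap i j π (Sum.inr (l, k)) =
      if l = i then Sum.inr (j, π k) else if l = j then Sum.inr (i, π k) else Sum.inr (l, k) := rfl

lemma triSwap_hom {n : ℕ} (i j : Fin n) (π : Equiv.Perm (Fin 2)) {x y : Vtx n}
    (h : (friendshipGraph n).Adj x y) :
    (friendshipGraph n).Adj (triSwap i j π x) (triSwap i j π y) := by
  match x, y with
  | Sum.inl a, Sum.inl b => exact absurd h (fg_not_adj_ll a b)
  | Sum.inl a, Sum.inr (l, k) =>
    rw [triSwap_inl, triSwap_inr]
    split_ifs <;> exact fg_adj_lr _ _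
  | Sum.inr (l, k), Sum.inl a =>
    rw [triSwap_inl, triSwap_inr]
    split_ifs <;> exact fg_adj_rl _ _
  | Sum.inr (l, k), Sum.inr (l', k') =>
    obtain ⟨h1, h2⟩ := (fg_adj_rr (l, k) (l', k')).mp h
    dsimp at h1 h2
    subst h1
    have hπ : π k ≠ π k' := fun hc => h2 (π.injective hc)
    rw [triSwap_inr, triSwap_inr]
    split_ifs <;> exact (fg_adj_rr _ _).mpr ⟨rfl, by first | exact hπ | exact h2⟩

def triSwapIso {n : ℕ} (i j : Fin n) (π : Equiv.Perm (Fin 2)) :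
    friendshipGraph n ≃g friendshipGraph n where
  toEquiv := Function.Involutive.toPerm _ (triSwap_invol i j π)
  map_rel_iff' := by
    intro x y
    show (friendshipGraph n).Adj (triSwap i j π x) (triSwap i j π y) ↔ _
    constructor
    · intro h
      have h2 := triSwap_hom i j π h
      rwa [triSwap_invol i j π x, triSwap_invol i j π y] at h2
    · exact triSwap_hom i j π

lemma triSwapIso_apply {n : ℕ} (i j : Fin n) (π : Equiv.Perm (Fin 2)) (v : Vtx n) :
    triSwapIso i j π v = triSwap i j π v := rfl

lemma outer_eq {n : ℕ} (l : Fin n) (k k' : Fin 2) (hkk : k ≠ k') :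
    s(Sum.inr (l, k), (Sum.inr (l, k') : Vtx n)) = s(Sum.inr (l, 0), Sum.inr (l, 1)) := by
  fin_cases k <;> fin_cases k' <;>
    first | exact absurd rfl hkk | rfl | exact Sym2.eq_swap

lemma triSwap_pres {n m : ℕ} (c : Sym2 (Vtx n) → Fin m) (i j : Fin n) (π : Equiv.Perm (Fin 2))
    (hspoke : ∀ k, c s(Sum.inl 0, Sum.inr (i, k)) = c s(Sum.inl 0, Sum.inr (j, π k)))
    (houter : c s(Sum.inr (i, 0), Sum.inr (i, 1)) = c s(Sum.inr (j, 0), Sum.inr (j, 1))) :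
    ∀ e ∈ (friendshipGraph n).edgeSet, c (Sym2.map (⇑(triSwapIso i j π)) e) = c e := by
  have key : ∀ (l : Fin n) (k : Fin 2),
      c s(Sum.inl 0, triSwap i j π (Sum.inr (l, k))) = c s(Sum.inl 0, Sum.inr (l, k)) := by
    intro l k
    rw [triSwap_inr]
    by_cases hli : l = i
    · rw [if_pos hli, hli]; exact (hspoke k).symm
    · rw [if_neg hli]
      by_cases hlj : l = j
      · rw [if_pos hlj, hlj]
        have h3 := hspoke (π k)
        rw [perm2_invol] at h3
        exact h3
      · rw [if_neg hlj]
  intro e he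
  induction e using Sym2.ind with
  | _ x y =>
    rw [SimpleGraph.mem_edgeSet] at he
    rw [Sym2.map_pair_eq]
    match x, y with
    | Sum.inl a, Sum.inl b => exact absurd he (fg_not_adj_ll a b)
    | Sum.inl a, Sum.inr (l, k) =>
      rw [show a = 0 from Subsingleton.elim a 0]
      show c s(Sum.inl 0, triSwap i j π (Sum.inr (l, k))) = _
      exact key l k
    | Sum.inr (l, k), Sum.inl a =>
      rw [show a = 0 from Subsingleton.elim a 0]
      show c s(triSwap i j π (Sum.inr (l, k)), Sum.inl 0) = _
      rw [Sym2.eq_swap]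
      conv_rhs => rw [Sym2.eq_swap]
      exact key l k
    | Sum.inr (l, k), Sum.inr (l', k') =>
      obtain ⟨h1, h2⟩ := (fg_adj_rr (l, k) (l', k')).mp he
      dsimp at h1 h2
      subst h1
      show c s(triSwap i j π (Sum.inr (l, k)), triSwap i j π (Sum.inr (l, k'))) = _
      rw [triSwap_inr, triSwap_inr, outer_eq l k k' h2]
      split_ifs with hli hlj
      · subst hli
        rw [outer_eq j (π k) (π k') (fun hcon => h2 (π.injective hcon))]
        exact houter.symm
      · subst hlj
        rw [outer_eq i (π k) (π k') (fun hcon => h2 (π.injective hcon))]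
        exact houter
      · rw [outer_eq l k k' h2]

lemma pairsCard (m : ℕ) :
    2 * Fintype.card {p : Fin m × Fin m // p.1 < p.2} = m * m - m := by
  have e1 : {p : Fin m × Fin m // p.1 < p.2} ≃ {p : Fin m × Fin m // p.2 < p.1} :=
    { toFun := fun p => ⟨(p.1.2, p.1.1), p.2⟩
      invFun := fun p => ⟨(p.1.2, p.1.1), p.2⟩
      left_inv := fun p => by rfl
      right_inv := fun p => by rfl }
  have e2 : ({p : Fin m × Fin m // p.1 < p.2} ⊕ {p : Fin m × Fin m // p.2 < p.1}) ≃
      {p : Fin m × Fin m // ¬ p.1 = p.2} :=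
    { toFun := Sum.elim (fun p => ⟨p.1, ne_of_lt p.2⟩) (fun p => ⟨p.1, (ne_of_lt p.2).symm⟩)
      invFun := fun p =>
        if h : p.1.1 < p.1.2 then Sum.inl ⟨p.1, h⟩
        else Sum.inr ⟨p.1, lt_of_le_of_ne (not_lt.mp h) (Ne.symm p.2)⟩
      left_inv := by
        rintro (⟨p, h⟩ | ⟨p, h⟩)
        · simp only [Sum.elim_inl]; exact dif_pos h
        · simp only [Sum.elim_inr]; exact dif_neg (asymm h)
      right_inv := by
        rintro ⟨p, h⟩
        by_cases hlt : p.1 < p.2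
        · simp [hlt]
        · simp [hlt] }
  have e3 : {p : Fin m × Fin m // p.1 = p.2} ≃ Fin m :=
    { toFun := fun p => p.1.1
      invFun := fun a => ⟨(a, a), rfl⟩
      left_inv := by rintro ⟨⟨a, b⟩, h⟩; cases h; rfl
      right_inv := fun a => rfl }
  have h1 := Fintype.card_congr e2
  rw [Fintype.card_sum, ← Fintype.card_congr e1] at h1
  have h2 : Fintype.card {p : Fin m × Fin m // ¬ p.1 = p.2} = m * m - m := by
    rw [Fintype.card_subtype_compl, Fintype.card_congr e3, Fintype.card_prod, Fintype.card_fin]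
  omega

lemma minmax_cases {α : Type*} [LinearOrder α] {a b a' b' : α}
    (h1 : min a b = min a' b') (h2 : max a b = max a' b') :
    (a = a' ∧ b = b') ∨ (a = b' ∧ b = a') := by
  rcases le_total a b with h | h
  · rcases le_total a' b' with h' | h'
    · rw [min_eq_left h, min_eq_left h'] at h1
      rw [max_eq_right h, max_eq_right h'] at h2
      exact Or.inl ⟨h1, h2⟩
    · rw [min_eq_left h, min_eq_right h'] at h1
      rw [max_eq_right h, max_eq_left h'] at h2
      exact Or.inr ⟨h1, h2⟩
  · rcases le_total a' b' with h' | h'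
    · rw [min_eq_right h, min_eq_left h'] at h1
      rw [max_eq_left h, max_eq_right h'] at h2
      exact Or.inr ⟨h2, h1⟩
    · rw [min_eq_right h, min_eq_right h'] at h1
      rw [max_eq_left h, max_eq_left h'] at h2
      exact Or.inl ⟨h2, h1⟩

lemma lower_bound {n m : ℕ} (c : Sym2 (Vtx n) → Fin m)
    (hc : ∀ f : friendshipGraph n ≃g friendshipGraph n,
      (∀ e ∈ (friendshipGraph n).edgeSet, c (Sym2.map (⇑f) e) = c e) → ∀ v, f v = v) :
    2 * n ≤ (m * m - m) * m := by
  set A : Fin n → Fin m := fun i => c s(Sum.inl 0, Sum.inr (i, 0)) with hA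
  set B : Fin n → Fin m := fun i => c s(Sum.inl 0, Sum.inr (i, 1)) with hB
  set E : Fin n → Fin m := fun i => c s(Sum.inr (i, 0), Sum.inr (i, 1)) with hE
  have contra : ∀ (i j : Fin n) (π : Equiv.Perm (Fin 2)),
      (∀ k, c s(Sum.inl 0, Sum.inr (i, k)) = c s(Sum.inl 0, Sum.inr (j, π k))) →
      E i = E j → (Sum.inr (j, π 0) : Vtx n) = Sum.inr (i, 0) := by
    intro i j π hs ho
    have h1 := hc (triSwapIso i j π) (triSwap_pres c i j π hs ho) (Sum.inr (i, 0))
    rw [triSwapIso_apply, triSwap_inr, if_pos rfl] at h1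
    exact h1
  have hne : ∀ i, A i ≠ B i := by
    intro i hab
    have hs : ∀ k, c s(Sum.inl 0, Sum.inr (i, k)) =
        c s(Sum.inl 0, Sum.inr (i, (Equiv.swap (0 : Fin 2) 1) k)) := by
      intro k
      match k with
      | 0 => rw [show (Equiv.swap (0 : Fin 2) 1) 0 = 1 by decide]; exact hab
      | 1 => rw [show (Equiv.swap (0 : Fin 2) 1) 1 = 0 by decide]; exact hab.symm
    have h2 := contra i i (Equiv.swap 0 1) hs rfl
    rw [show (Equiv.swap (0 : Fin 2) 1) 0 = 1 by decide] at h2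
    have := (Prod.mk.injEq .. ▸ Sum.inr.inj h2).2
    exact absurd this (by decide)
  have Pinj : Function.Injective (fun i : Fin n =>
      ((⟨(min (A i) (B i), max (A i) (B i)), min_lt_max.mpr (hne i)⟩ :
        {p : Fin m × Fin m // p.1 < p.2}), E i)) := by
    intro i i' h
    have hmin : min (A i) (B i) = min (A i') (B i') := congrArg (fun q => q.1.1.1) h
    have hmax : max (A i) (B i) = max (A i') (B i') := congrArg (fun q => q.1.1.2) h
    have hEe : E i = E i' := congrArg (fun q => q.2) h
    rcases minmax_cases hmin hmax with ⟨ha, hb⟩ | ⟨ha, hb⟩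
    · have hs : ∀ k, c s(Sum.inl 0, Sum.inr (i, k)) =
          c s(Sum.inl 0, Sum.inr (i', (1 : Equiv.Perm (Fin 2)) k)) := by
        intro k
        match k with
        | 0 => exact ha
        | 1 => exact hb
      have h2 := contra i i' 1 hs hEe
      exact ((Prod.mk.injEq .. ▸ Sum.inr.inj h2).1).symm
    · exfalso
      have hs : ∀ k, c s(Sum.inl 0, Sum.inr (i, k)) =
          c s(Sum.inl 0, Sum.inr (i', (Equiv.swap (0 : Fin 2) 1) k)) := by
        intro k
        match k with
        | 0 => rw [show (Equiv.swap (0 : Fin 2) 1) 0 = 1 by decide]; exact ha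
        | 1 => rw [show (Equiv.swap (0 : Fin 2) 1) 1 = 0 by decide]; exact hb
      have h2 := contra i i' (Equiv.swap 0 1) hs hEe
      rw [show (Equiv.swap (0 : Fin 2) 1) 0 = 1 by decide] at h2
      exact absurd (Prod.mk.injEq .. ▸ Sum.inr.inj h2).2 (by decide)
  have hcard := Fintype.card_le_of_injective _ Pinj
  rw [Fintype.card_fin, Fintype.card_prod, Fintype.card_fin] at hcard
  calc 2 * n ≤ 2 * (Fintype.card {p : Fin m × Fin m // p.1 < p.2} * m) := by omega
    _ = (m * m - m) * m := by rw [← mul_assoc, pairsCard]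

lemma upper_bound {n d : ℕ} (hn : 2 ≤ n) (hd2 : 2 ≤ d) (hd : 2 * n ≤ (d * d - d) * d) :
    ∃ c : Sym2 (Vtx n) → Fin d, ∀ f : friendshipGraph n ≃g friendshipGraph n,
      (∀ e ∈ (friendshipGraph n).edgeSet, c (Sym2.map (⇑f) e) = c e) → ∀ v, f v = v := by
  have hcard : Fintype.card (Fin n) ≤
      Fintype.card ({p : Fin d × Fin d // p.1 < p.2} × Fin d) := by
    rw [Fintype.card_fin, Fintype.card_prod, Fintype.card_fin]
    have h1 : (d * d - d) * d = 2 * (Fintype.card {p : Fin d × Fin d // p.1 < p.2} * d) := by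
      rw [← pairsCard, mul_assoc]
    omega
  obtain ⟨ι⟩ := Function.Embedding.nonempty_of_card_le hcard
  set a : Fin n → Fin d := fun i => (ι i).1.1.1 with ha_def
  set b : Fin n → Fin d := fun i => (ι i).1.1.2 with hb_def
  set ee : Fin n → Fin d := fun i => (ι i).2 with he_def
  have hab : ∀ i, a i < b i := fun i => (ι i).1.2
  set z : Fin d := ⟨0, by omega⟩ with hz
  set sp : Fin n → Fin 2 → Fin d := fun i k => if k = 0 then a i else b i with hsp
  set h' : Vtx n → Vtx n → Fin d := fun x y =>
    match x, y with
    | Sum.inl _, Sum.inl _ => z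
    | Sum.inl _, Sum.inr (l, k) => sp l k
    | Sum.inr (l, k), Sum.inl _ => sp l k
    | Sum.inr (l, _), Sum.inr (l', _) => if l = l' then ee l else z
    with hh
  have hsymm : ∀ x y, h' x y = h' y x := by
    rintro (x | ⟨l, k⟩) (y | ⟨l', k'⟩)
    · rfl
    · rfl
    · rfl
    · show (if l = l' then ee l else z) = (if l' = l then ee l' else z)
      by_cases hll : l = l'
      · subst hll; rfl
      · rw [if_neg hll, if_neg (Ne.symm hll)]
  refine ⟨Sym2.lift ⟨h', hsymm⟩, ?_⟩
  intro f hf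
  have hcen := center_fixed hn f
  have hinr : ∀ w : Fin n × Fin 2, ∃ u, f (Sum.inr w) = Sum.inr u := by
    intro w
    cases hfw : f (Sum.inr w) with
    | inl aa =>
      exfalso
      rw [Subsingleton.elim aa 0, ← hcen] at hfw
      exact absurd (f.injective hfw) (by simp)
    | inr u => exact ⟨u, rfl⟩
  have hfix : ∀ i : Fin n,
      f (Sum.inr (i, 0)) = Sum.inr (i, 0) ∧ f (Sum.inr (i, 1)) = Sum.inr (i, 1) := by
    intro i
    obtain ⟨⟨σ0, k0⟩, h0⟩ := hinr (i, 0)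
    obtain ⟨⟨σ1, k1⟩, h1⟩ := hinr (i, 1)
    have hadj : (friendshipGraph n).Adj (Sum.inr (i, 0)) (Sum.inr (i, 1)) :=
      (fg_adj_rr (i, 0) (i, 1)).mpr ⟨rfl, show (0 : Fin 2) ≠ 1 by decide⟩
    have hadj2 := f.map_rel_iff.mpr hadj
    rw [h0, h1] at hadj2
    obtain ⟨hσ, hk⟩ := (fg_adj_rr _ _).mp hadj2
    dsimp at hσ hk
    subst hσ
    -- spoke 0
    have hs0 := hf s(Sum.inl 0, Sum.inr (i, 0))
      ((friendshipGraph n).mem_edgeSet.mpr (fg_adj_lr _ _))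
    rw [Sym2.map_pair_eq, hcen, h0] at hs0
    have hs0' : sp σ0 k0 = sp i 0 := hs0
    -- spoke 1
    have hs1 := hf s(Sum.inl 0, Sum.inr (i, 1))
      ((friendshipGraph n).mem_edgeSet.mpr (fg_adj_lr _ _))
    rw [Sym2.map_pair_eq, hcen, h1] at hs1
    have hs1' : sp σ0 k1 = sp i 1 := hs1
    -- outer
    have ho := hf s(Sum.inr (i, 0), Sum.inr (i, 1))
      ((friendshipGraph n).mem_edgeSet.mpr hadj)
    rw [Sym2.map_pair_eq, h0, h1] at ho
    have ho' : (if σ0 = σ0 then ee σ0 else z) = (if i = i then ee i else z) := ho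
    rw [if_pos rfl, if_pos rfl] at ho'
    have fin2 : ∀ k : Fin 2, k = 0 ∨ k = 1 := by decide
    rcases fin2 k0 with rfl | rfl <;> rcases fin2 k1 with rfl | rfl
    case inl.inl => exact absurd rfl hk
    case inr.inr => exact absurd rfl hk
    case inl.inr =>
      have e1 : a σ0 = a i := hs0'
      have e2 : b σ0 = b i := hs1'
      have : ι σ0 = ι i := by
        apply Prod.ext
        · exact Subtype.ext (Prod.ext e1 e2)
        · exact ho'
      have hσi : σ0 = i := ι.injective this
      subst hσi
      exact ⟨h0, h1⟩
    case inr.inl =>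
      exfalso
      have e1 : b σ0 = a i := hs0'
      have e2 : a σ0 = b i := hs1'
      have := hab σ0
      rw [e1, e2] at this
      exact absurd (hab i) (asymm this)
  intro v
  match v with
  | Sum.inl aa => rw [Subsingleton.elim aa 0]; exact hcen
  | Sum.inr (l, 0) => exact (hfix l).1
  | Sum.inr (l, 1) => exact (hfix l).2

set_option maxHeartbeats 1600000 in
theorem distinguishingIndex_friendshipGraph (n : ℕ) (hn : 2 ≤ n) :
    (distinguishingIndex (friendshipGraph n) : ℤ) =
      ⌈(1 / 3 : ℝ) * (1 + 27 * (n : ℝ) + 3 * Real.sqrt (81 * (n : ℝ) ^ 2 + 6 * n)) ^ ((1 : ℝ) / 3)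
        + 1 / (3 * (1 + 27 * (n : ℝ) + 3 * Real.sqrt (81 * (n : ℝ) ^ 2 + 6 * n)) ^ ((1 : ℝ) / 3))
        + 1 / 3⌉ := by
  -- the minimal d with 2n ≤ (d²-d)d
  have hex : ∃ d : ℕ, 2 * n ≤ (d * d - d) * d := by
    refine ⟨2 * n, ?_⟩
    have h1 : 2 * (2 * n) ≤ (2 * n) * (2 * n) := Nat.mul_le_mul_right _ (by omega)
    have h2 : 1 ≤ (2 * n) * (2 * n) - (2 * n) := by omega
    calc 2 * n = 1 * (2 * n) := (one_mul _).symm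
      _ ≤ ((2 * n) * (2 * n) - 2 * n) * (2 * n) := Nat.mul_le_mul_right _ h2
  obtain ⟨d, hPd, hmin⟩ : ∃ d : ℕ, 2 * n ≤ (d * d - d) * d ∧
      ∀ m : ℕ, 2 * n ≤ (m * m - m) * m → d ≤ m :=
    ⟨Nat.find hex, Nat.find_spec hex, fun m hm => Nat.find_min' hex hm⟩
  have hd2 : 2 ≤ d := by
    by_contra hcon
    push_neg at hcon
    have h1 : d * d ≤ d := by
      calc d * d ≤ 1 * d := Nat.mul_le_mul_right d (by omega)
        _ = d := one_mul d
    have h2 : d * d - d = 0 := by omega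
    rw [h2, Nat.zero_mul] at hPd
    omega
  have hnot : ¬ (2 * n ≤ ((d - 1) * (d - 1) - (d - 1)) * (d - 1)) := by
    intro hcon
    have := hmin (d - 1) hcon
    omega
  -- distinguishing index equals d
  have hDI : distinguishingIndex (friendshipGraph n) = d := by
    apply le_antisymm
    · exact Nat.sInf_le (upper_bound hn hd2 hPd)
    · apply le_csInf ⟨d, upper_bound hn hd2 hPd⟩
      rintro m ⟨c, hc⟩
      exact hmin m (lower_bound c hc)
  rw [hDI]
  -- real arithmetic
  have hs0 : (0:ℝ) ≤ 81 * (n:ℝ)^2 + 6 * n := by positivity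
  set s : ℝ := Real.sqrt (81 * (n:ℝ)^2 + 6 * n) with hs_def
  have hs2 : s^2 = 81 * (n:ℝ)^2 + 6 * n := Real.sq_sqrt hs0
  have hs_nn : 0 ≤ s := Real.sqrt_nonneg _
  have hn1 : (1:ℝ) ≤ (n:ℝ) := by exact_mod_cast Nat.one_le_iff_ne_zero.mpr (by omega)
  have ha_pos : (0:ℝ) < 1 + 27 * (n:ℝ) + 3 * s := by nlinarith
  have ha_one : (1:ℝ) ≤ 1 + 27 * (n:ℝ) + 3 * s := by nlinarith
  set u : ℝ := (1 + 27 * (n:ℝ) + 3 * s) ^ ((1:ℝ)/3) with hu_def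
  have hu_pos : 0 < u := Real.rpow_pos_of_pos ha_pos _
  have hu3 : u^3 = 1 + 27 * (n:ℝ) + 3 * s := by
    rw [hu_def, ← Real.rpow_natCast (_ ^ ((1:ℝ)/3)) 3, ← Real.rpow_mul ha_pos.le]
    norm_num
  have hu1 : 1 ≤ u := by
    calc (1:ℝ) = 1 ^ ((1:ℝ)/3) := (Real.one_rpow _).symm
      _ ≤ u := Real.rpow_le_rpow (by norm_num) ha_one (by norm_num)
  set v : ℝ := 1 / u with hv_def
  have huv : u * v = 1 := by rw [hv_def]; field_simp
  have haa : (1 + 27 * (n:ℝ) + 3 * s) * (1 + 27 * (n:ℝ) - 3 * s) = 1 := by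
    linear_combination (-9 : ℝ) * hs2
  have hv3 : v^3 = 1 + 27 * (n:ℝ) - 3 * s := by
    have h1 : v^3 * u^3 = 1 := by rw [← mul_pow, mul_comm v u, huv, one_pow]
    calc v^3 = v^3 * ((1 + 27 * (n:ℝ) + 3 * s) * (1 + 27 * (n:ℝ) - 3 * s)) := by
          rw [haa, mul_one]
      _ = (v^3 * u^3) * (1 + 27 * (n:ℝ) - 3 * s) := by rw [hu3]; ring
      _ = 1 + 27 * (n:ℝ) - 3 * s := by rw [h1, one_mul]
  have hy3 : (u + v)^3 = 2 + 54 * (n:ℝ) + 3 * (u + v) := by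
    linear_combination hu3 + hv3 + (3 * (u + v)) * huv
  set x : ℝ := (1 / 3 : ℝ) * u + 1 / (3 * u) + 1 / 3 with hx_def
  have hx_eq : x = (u + v + 1) / 3 := by
    rw [hx_def, hv_def]; field_simp
  have hx3 : x^3 - x^2 = 2 * (n:ℝ) := by
    rw [hx_eq]; linear_combination (1/27 : ℝ) * hy3
  have hx1 : 1 ≤ x := by
    have hAM : 2 ≤ u + v := by nlinarith [sq_nonneg (u - 1)]
    rw [hx_eq]; linarith
  -- inequalities
  have hdd : d ≤ d * d := Nat.le_mul_of_pos_left d (by omega)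
  have hreal1 : 2 * (n:ℝ) ≤ ((d:ℝ) * d - d) * d := by
    have := hPd
    have hcast : (((d * d - d) * d : ℕ) : ℝ) = ((d:ℝ) * d - d) * d := by
      push_cast [Nat.cast_sub hdd]; ring
    calc 2 * (n:ℝ) = ((2 * n : ℕ) : ℝ) := by push_cast; ring
      _ ≤ (((d * d - d) * d : ℕ) : ℝ) := by exact_mod_cast hPd
      _ = _ := hcast
  have hreal2 : (((d:ℝ) - 1) * ((d:ℝ) - 1) - ((d:ℝ) - 1)) * ((d:ℝ) - 1) < 2 * (n:ℝ) := by
    have h1 : ((d - 1) * (d - 1) - (d - 1)) * (d - 1) < 2 * n := by omega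
    have hee : (d - 1 : ℕ) ≤ (d - 1) * (d - 1) := Nat.le_mul_of_pos_left _ (by omega)
    have hcast1 : (((d - 1 : ℕ)) : ℝ) = (d:ℝ) - 1 := by
      push_cast [Nat.cast_sub (show 1 ≤ d by omega)]; ring
    have hcast : ((((d - 1) * (d - 1) - (d - 1)) * (d - 1) : ℕ) : ℝ)
        = (((d:ℝ) - 1) * ((d:ℝ) - 1) - ((d:ℝ) - 1)) * ((d:ℝ) - 1) := by
      push_cast [Nat.cast_sub hee, Nat.cast_sub (show 1 ≤ d by omega)]; ring
    calc (((d:ℝ) - 1) * ((d:ℝ) - 1) - ((d:ℝ) - 1)) * ((d:ℝ) - 1)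
        = ((((d - 1) * (d - 1) - (d - 1)) * (d - 1) : ℕ) : ℝ) := hcast.symm
      _ < ((2 * n : ℕ) : ℝ) := by exact_mod_cast h1
      _ = 2 * (n:ℝ) := by push_cast; ring
  have hdR : (2:ℝ) ≤ (d:ℝ) := by exact_mod_cast hd2
  -- x ≤ d
  have hxd : x ≤ (d:ℝ) := by
    by_contra hcon
    push_neg at hcon
    have p1 : x * 1 ≤ x * x := mul_le_mul_of_nonneg_left hx1 (by linarith)
    have p2 : (d:ℝ) * 1 ≤ (d:ℝ) * d := mul_le_mul_of_nonneg_left (by linarith) (by linarith)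
    have p3 : (0:ℝ) < x * d := mul_pos (by linarith) (by linarith)
    have hpos : (0:ℝ) < x * x + x * d + (d:ℝ) * d - x - d := by nlinarith
    have hmul := mul_pos (sub_pos.mpr hcon) hpos
    have hexp : (x - d) * (x * x + x * d + (d:ℝ) * d - x - d)
        = (x^3 - x^2) - (((d:ℝ) * d - d) * d) := by ring
    rw [hexp, hx3] at hmul
    linarith
  -- d - 1 < x
  have hdx : (d:ℝ) - 1 < x := by
    by_contra hcon
    push_neg at hcon
    have he1 : (1:ℝ) ≤ (d:ℝ) - 1 := by linarith
    set e : ℝ := (d:ℝ) - 1 with he_def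
    have p1 : x * 1 ≤ x * x := mul_le_mul_of_nonneg_left hx1 (by linarith)
    have p2 : e * 1 ≤ e * e := mul_le_mul_of_nonneg_left he1 (by linarith)
    have p3 : (0:ℝ) ≤ e * x := mul_nonneg (by linarith) (by linarith)
    have hpos : (0:ℝ) ≤ e * e + e * x + x * x - e - x := by nlinarith
    have hmul := mul_nonneg (sub_nonneg.mpr hcon) hpos
    have hexp : (e - x) * (e * e + e * x + x * x - e - x)
        = ((e * e - e) * e) - (x^3 - x^2) := by ring
    rw [hexp, hx3] at hmul
    linarith
  symm
  rw [Int.ceil_eq_iff]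
  constructor
  · push_cast; linarith
  · push_cast; linarith
end
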